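/- arXiv:2210.00895 — 6 statements merged into one kernel-verified Lean document; each statement's English description precedes it below -/
import Mathlib

section
/- Let ν be a Borel probability measure on [0,1]. Then the logarithmic moment-generating function φ_ν is differentiable on ℝ with derivative φ'_ν(λ) = (∫ x e^{λx} dν(x)) / (∫ e^{λx} dν(x)); this derivative is non-decreasing in λ; and lim_{λ→−∞} φ'_ν(λ) = m(ν), the minimum of the closed support of ν. -/
open MeasureTheory Filter Set ProbabilityTheory
open scoped ENNReal NNReal

noncomputable section

/-- Mean of a (probability) measure on ℝ. -/
def Emean (ν : Measure ℝ) : ℝ := ∫ x, x ∂ν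

open Classical in
/-- Kullback–Leibler divergence `∫ ln (dζ/dν) dζ`, equal to `+∞` if `ζ` is not absolutely
continuous with respect to `ν` (or the integral is not defined). -/
def KL (ζ ν : Measure ℝ) : ℝ≥0∞ :=
  if ζ ≪ ν ∧ Integrable (fun x => Real.log ((ζ.rnDeriv ν x).toReal)) ζ
  then ENNReal.ofReal (∫ x, Real.log ((ζ.rnDeriv ν x).toReal) ∂ζ)
  else ⊤

/-- Log-moment generating function `φ_ν`, with values in `EReal` (so that `+∞` is allowed). -/
def logMgf (ν : Measure ℝ) (l : ℝ) : EReal :=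
  ENNReal.log (∫⁻ x, ENNReal.ofReal (Real.exp (l * x)) ∂ν)

/-- Fenchel–Legendre transform `φ*_ν(x) = sup_λ (λ x − φ_ν(λ))`. -/
def phiStar (ν : Measure ℝ) (x : ℝ) : EReal :=
  ⨆ l : ℝ, ((l * x : ℝ) : EReal) - logMgf ν l

/-- `Φ(ν', ν) = inf_{x ∈ [E(ν'), E(ν)]} (φ*_{ν'}(x) + φ*_ν(x))`. -/
def Phi (ν' ν : Measure ℝ) : EReal :=
  ⨅ x ∈ Set.Icc (Emean ν') (Emean ν), (phiStar ν' x + phiStar ν x)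

/-- The model `P[0,1]` of all Borel probability measures on `[0,1]` (seen as measures on ℝ). -/
def Pcc : Set (Measure ℝ) :=
  {ζ | IsProbabilityMeasure ζ ∧ ζ (Set.Icc (0:ℝ) 1)ᶜ = 0}

/-- `Linf<(x, ν) = inf {KL(ζ, ν) : ζ ∈ D, E(ζ) < x}`, with `inf ∅ = +∞`. -/
def Linflt (D : Set (Measure ℝ)) (x : ℝ) (ν : Measure ℝ) : ℝ≥0∞ :=
  ⨅ ζ ∈ {ζ ∈ D | Emean ζ < x}, KL ζ ν

/-- `Linf≤(x, ν) = inf {KL(ζ, ν) : ζ ∈ D, E(ζ) ≤ x}`, with `inf ∅ = +∞`. -/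
def Linfle (D : Set (Measure ℝ)) (x : ℝ) (ν : Measure ℝ) : ℝ≥0∞ :=
  ⨅ ζ ∈ {ζ ∈ D | Emean ζ ≤ x}, KL ζ ν

/-- `Linf>(x, ν) = inf {KL(ζ, ν) : ζ ∈ D, E(ζ) > x}`, with `inf ∅ = +∞`. -/
def Linfgt (D : Set (Measure ℝ)) (x : ℝ) (ν : Measure ℝ) : ℝ≥0∞ :=
  ⨅ ζ ∈ {ζ ∈ D | x < Emean ζ}, KL ζ ν

/-- `Linf≥(x, ν) = inf {KL(ζ, ν) : ζ ∈ D, E(ζ) ≥ x}`, with `inf ∅ = +∞`. -/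
def Linfge (D : Set (Measure ℝ)) (x : ℝ) (ν : Measure ℝ) : ℝ≥0∞ :=
  ⨅ ζ ∈ {ζ ∈ D | x ≤ Emean ζ}, KL ζ ν

/-- Closed support of a measure on ℝ. -/
def msupport (ν : Measure ℝ) : Set ℝ := {x | ∀ U ∈ nhds x, ν U ≠ 0}

/-- Lower end `m(ν)` of the closed support of `ν`. -/
def mMin (ν : Measure ℝ) : ℝ := sInf (msupport ν)

/-- Upper end `M(ν)` of the closed support of `ν`. -/
def mMax (ν : Measure ℝ) : ℝ := sSup (msupport ν)


section AuxLogMgf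

variable {ν : Measure ℝ}

lemma aux_ae (h0 : ν (Set.Icc (0:ℝ) 1)ᶜ = 0) : ∀ᵐ x ∂ν, x ∈ Set.Icc (0:ℝ) 1 := by
  rw [ae_iff]
  exact h0

lemma aux_integrable [IsProbabilityMeasure ν] (h0 : ν (Set.Icc (0:ℝ) 1)ᶜ = 0)
    {g : ℝ → ℝ} (hg : Continuous g) {C : ℝ} (hC : ∀ x ∈ Set.Icc (0:ℝ) 1, |g x| ≤ C) :
    Integrable g ν :=
  (integrable_const C).mono' hg.aestronglyMeasurable
    ((aux_ae h0).mono fun x hx => by simpa using hC x hx)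

lemma aux_norm_bound (n : ℕ) {x t C : ℝ} (hx : x ∈ Set.Icc (0:ℝ) 1) (ht : |t| ≤ C) :
    |x ^ n * Real.exp (t * x)| ≤ Real.exp C := by
  have h1 : |x| ≤ 1 := abs_le.2 ⟨by linarith [hx.1], hx.2⟩
  have h2 : Real.exp (t * x) ≤ Real.exp C := by
    apply Real.exp_le_exp.2
    calc t * x ≤ |t * x| := le_abs_self _
      _ = |t| * |x| := abs_mul t x
      _ ≤ C * 1 := mul_le_mul ht h1 (abs_nonneg x) (le_trans (abs_nonneg t) ht)
      _ = C := mul_one C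
  rw [abs_mul, abs_pow, Real.abs_exp]
  calc |x| ^ n * Real.exp (t * x) ≤ 1 ^ n * Real.exp C :=
        mul_le_mul (pow_le_pow_left₀ (abs_nonneg x) h1 n) h2 (Real.exp_pos _).le (by positivity)
    _ = Real.exp C := by rw [one_pow, one_mul]

lemma aux_cont (n : ℕ) (t : ℝ) : Continuous fun x : ℝ => x ^ n * Real.exp (t * x) := by
  fun_prop

lemma int_pow_exp [IsProbabilityMeasure ν] (h0 : ν (Set.Icc (0:ℝ) 1)ᶜ = 0) (n : ℕ) (t : ℝ) :
    Integrable (fun x => x ^ n * Real.exp (t * x)) ν :=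
  aux_integrable h0 (aux_cont n t) (fun x hx => aux_norm_bound n hx le_rfl)

lemma int_exp' [IsProbabilityMeasure ν] (h0 : ν (Set.Icc (0:ℝ) 1)ᶜ = 0) (t : ℝ) :
    Integrable (fun x => Real.exp (t * x)) ν := by
  simpa using int_pow_exp h0 0 t

lemma int_xexp' [IsProbabilityMeasure ν] (h0 : ν (Set.Icc (0:ℝ) 1)ᶜ = 0) (t : ℝ) :
    Integrable (fun x => x * Real.exp (t * x)) ν := by
  simpa using int_pow_exp h0 1 t

lemma D_pos [IsProbabilityMeasure ν] (h0 : ν (Set.Icc (0:ℝ) 1)ᶜ = 0) (t : ℝ) :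
    0 < ∫ x, Real.exp (t * x) ∂ν :=
  integral_exp_pos (int_exp' h0 t)

lemma hasDerivAt_pow_int [IsProbabilityMeasure ν] (h0 : ν (Set.Icc (0:ℝ) 1)ᶜ = 0) (n : ℕ)
    (l : ℝ) :
    HasDerivAt (fun t : ℝ => ∫ x, x ^ n * Real.exp (t * x) ∂ν)
      (∫ x, x ^ (n + 1) * Real.exp (l * x) ∂ν) l := by
  have habs : ∀ t ∈ Metric.ball l 1, |t| ≤ |l| + 1 := by
    intro t ht
    have := mem_ball_iff_norm.1 ht
    rw [Real.norm_eq_abs] at this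
    calc |t| = |l + (t - l)| := by ring_nf
      _ ≤ |l| + |t - l| := abs_add_le _ _
      _ ≤ |l| + 1 := by linarith
  have H := hasDerivAt_integral_of_dominated_loc_of_deriv_le (μ := ν)
    (F := fun t x => x ^ n * Real.exp (t * x))
    (F' := fun t x => x ^ (n + 1) * Real.exp (t * x))
    (bound := fun _ => Real.exp (|l| + 1)) (x₀ := l) (Metric.ball_mem_nhds l one_pos)
    (Eventually.of_forall fun t => (aux_cont n t).aestronglyMeasurable)
    (int_pow_exp h0 n l)
    ((aux_cont (n + 1) l).aestronglyMeasurable)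
    ((aux_ae h0).mono fun x hx t ht => by
      rw [Real.norm_eq_abs]
      exact aux_norm_bound (n + 1) hx (habs t ht))
    (integrable_const _)
    (Eventually.of_forall fun x t _ => by
      have h1 : HasDerivAt (fun t : ℝ => t * x) x t := hasDerivAt_mul_const x
      have h2 := (h1.exp).const_mul (x ^ n)
      rw [show x ^ (n + 1) * Real.exp (t * x) = x ^ n * (Real.exp (t * x) * x) by ring]
      exact h2)
  exact H.2

lemma hasDerivAt_D [IsProbabilityMeasure ν] (h0 : ν (Set.Icc (0:ℝ) 1)ᶜ = 0) (l : ℝ) :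
    HasDerivAt (fun t : ℝ => ∫ x, Real.exp (t * x) ∂ν)
      (∫ x, x * Real.exp (l * x) ∂ν) l := by
  simpa using hasDerivAt_pow_int h0 0 l

lemma hasDerivAt_N [IsProbabilityMeasure ν] (h0 : ν (Set.Icc (0:ℝ) 1)ᶜ = 0) (l : ℝ) :
    HasDerivAt (fun t : ℝ => ∫ x, x * Real.exp (t * x) ∂ν)
      (∫ x, x ^ 2 * Real.exp (l * x) ∂ν) l := by
  have := hasDerivAt_pow_int h0 1 l
  simpa using this

lemma sq_int_le [IsProbabilityMeasure ν] (h0 : ν (Set.Icc (0:ℝ) 1)ᶜ = 0) (l : ℝ) :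
    (∫ x, x * Real.exp (l * x) ∂ν) ^ 2 ≤
      (∫ x, x ^ 2 * Real.exp (l * x) ∂ν) * (∫ x, Real.exp (l * x) ∂ν) := by
  set D := ∫ x, Real.exp (l * x) ∂ν with hD_def
  have hD : 0 < D := D_pos h0 l
  set μ := ν.tilted (fun x => l * x) with hμ_def
  haveI : IsProbabilityMeasure μ := isProbabilityMeasure_tilted (int_exp' h0 l)
  have haeμ : ∀ᵐ x ∂μ, x ∈ Set.Icc (0:ℝ) 1 :=
    (tilted_absolutelyContinuous ν _).ae_le (aux_ae h0)
  have hX : MemLp (fun x : ℝ => x) 2 μ := memLp_of_bounded haeμ aestronglyMeasurable_id 2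
  have hvar := variance_nonneg (fun x : ℝ => x) μ
  rw [variance_eq_sub hX] at hvar
  have h1 : ∫ x, x ∂μ = (∫ x, x * Real.exp (l * x) ∂ν) / D := by
    rw [hμ_def, integral_tilted, ← integral_div]
    congr 1
    ext x
    rw [smul_eq_mul, ← hD_def]
    ring
  have h2 : ∫ x, x ^ 2 ∂μ = (∫ x, x ^ 2 * Real.exp (l * x) ∂ν) / D := by
    rw [hμ_def, integral_tilted, ← integral_div]
    congr 1
    ext x
    rw [smul_eq_mul, ← hD_def]
    ring
  simp only [Pi.pow_apply] at hvar
  rw [h1, h2] at hvar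
  rw [sub_nonneg, div_pow, div_le_div_iff₀ (by positivity) hD] at hvar
  nlinarith [hvar, hD]

lemma msupport_compl_null : ν (msupport ν)ᶜ = 0 := by
  apply measure_null_of_locally_null
  intro x hx
  simp only [msupport, Set.mem_compl_iff, Set.mem_setOf_eq, not_forall, not_ne_iff,
    exists_prop] at hx
  obtain ⟨U, hU, hU0⟩ := hx
  exact ⟨U, nhdsWithin_le_nhds hU, hU0⟩

lemma isClosed_msupport' : IsClosed (msupport ν) := by
  rw [← isOpen_compl_iff, isOpen_iff_forall_mem_open]
  intro x hx
  simp only [msupport, Set.mem_compl_iff, Set.mem_setOf_eq, not_forall, not_ne_iff,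
    exists_prop] at hx
  obtain ⟨U, hU, hU0⟩ := hx
  obtain ⟨V, hVU, hVopen, hxV⟩ := mem_nhds_iff.1 hU
  refine ⟨V, fun y hy => ?_, hVopen, hxV⟩
  simp only [msupport, Set.mem_compl_iff, Set.mem_setOf_eq, not_forall, not_ne_iff,
    exists_prop]
  exact ⟨V, hVopen.mem_nhds hy, measure_mono_null hVU hU0⟩

lemma msupport_subset (h0 : ν (Set.Icc (0:ℝ) 1)ᶜ = 0) : msupport ν ⊆ Set.Icc (0:ℝ) 1 := by
  intro x hx
  by_contra hc
  exact hx _ (isClosed_Icc.isOpen_compl.mem_nhds hc) h0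

lemma msupport_nonempty [IsProbabilityMeasure ν] : (msupport ν).Nonempty := by
  by_contra h
  rw [Set.not_nonempty_iff_eq_empty] at h
  have h2 := msupport_compl_null (ν := ν)
  rw [h, Set.compl_empty] at h2
  simp [measure_univ] at h2

end AuxLogMgf

/-- For a Borel probability measure `ν` on `[0,1]`: the logarithmic moment-generating function
`λ ↦ ln ∫ e^{λx} dν(x)` is differentiable on ℝ with derivative
`λ ↦ (∫ x e^{λx} dν(x)) / (∫ e^{λx} dν(x))`; this derivative is non-decreasing in `λ`;
and it tends to `m(ν)`, the minimum of the closed support of `ν`, as `λ → −∞`. -/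
theorem logMgf_hasDerivAt_monotone_tendsto (ν : Measure ℝ) (hν : ν ∈ Pcc) :
    (∀ l : ℝ, HasDerivAt (fun t : ℝ => Real.log (∫ x, Real.exp (t * x) ∂ν))
        ((∫ x, x * Real.exp (l * x) ∂ν) / (∫ x, Real.exp (l * x) ∂ν)) l) ∧
    Monotone (fun l : ℝ => (∫ x, x * Real.exp (l * x) ∂ν) / (∫ x, Real.exp (l * x) ∂ν)) ∧
    Filter.Tendsto (fun l : ℝ => (∫ x, x * Real.exp (l * x) ∂ν) / (∫ x, Real.exp (l * x) ∂ν))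
      Filter.atBot (nhds (mMin ν)) := by
  obtain ⟨hp, h0⟩ := hν
  haveI : IsProbabilityMeasure ν := hp
  have hD : ∀ l : ℝ, 0 < ∫ x, Real.exp (l * x) ∂ν := D_pos h0
  -- Part 1: derivative
  have part1 : ∀ l : ℝ, HasDerivAt (fun t : ℝ => Real.log (∫ x, Real.exp (t * x) ∂ν))
      ((∫ x, x * Real.exp (l * x) ∂ν) / (∫ x, Real.exp (l * x) ∂ν)) l :=
    fun l => (hasDerivAt_D h0 l).log (hD l).ne'
  -- Part 2: monotone
  have hgderiv : ∀ l : ℝ, HasDerivAt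
      (fun l : ℝ => (∫ x, x * Real.exp (l * x) ∂ν) / (∫ x, Real.exp (l * x) ∂ν))
      (((∫ x, x ^ 2 * Real.exp (l * x) ∂ν) * (∫ x, Real.exp (l * x) ∂ν) -
        (∫ x, x * Real.exp (l * x) ∂ν) * (∫ x, x * Real.exp (l * x) ∂ν)) /
        (∫ x, Real.exp (l * x) ∂ν) ^ 2) l :=
    fun l => (hasDerivAt_N h0 l).div (hasDerivAt_D h0 l) (hD l).ne'
  have part2 : Monotone
      (fun l : ℝ => (∫ x, x * Real.exp (l * x) ∂ν) / (∫ x, Real.exp (l * x) ∂ν)) := by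
    apply monotone_of_deriv_nonneg (fun l => (hgderiv l).differentiableAt)
    intro l
    rw [(hgderiv l).deriv]
    apply div_nonneg _ (sq_nonneg _)
    have := sq_int_le h0 l
    nlinarith [this]
  -- Part 3: limit at -∞
  refine ⟨part1, part2, ?_⟩
  set m := mMin ν with hm_def
  have hsub : msupport ν ⊆ Set.Icc (0:ℝ) 1 := msupport_subset h0
  have hbdd : BddBelow (msupport ν) := ⟨0, fun y hy => (hsub hy).1⟩
  have hm_mem : m ∈ msupport ν :=
    isClosed_msupport'.csInf_mem msupport_nonempty hbdd
  have hm0 : 0 ≤ m := (hsub hm_mem).1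
  have hIio : ν (Set.Iio m) = 0 := by
    refine measure_mono_null (fun x hx => ?_) msupport_compl_null
    intro hmem
    exact absurd (csInf_le hbdd hmem) (not_le.2 hx)
  have hml : ∀ᵐ x ∂ν, m ≤ x := by
    rw [ae_iff]
    simp only [not_le]
    exact hIio
  have hlow : ∀ l : ℝ, m ≤ (∫ x, x * Real.exp (l * x) ∂ν) / (∫ x, Real.exp (l * x) ∂ν) := by
    intro l
    rw [le_div_iff₀ (hD l)]
    have hle := integral_mono_ae ((int_exp' h0 l).const_mul m) (int_xexp' h0 l)
      (hml.mono fun x hx => mul_le_mul_of_nonneg_right hx (Real.exp_pos _).le)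
    rw [integral_const_mul] at hle
    exact hle
  rw [tendsto_order]
  constructor
  · exact fun a ha => Eventually.of_forall fun l => lt_of_lt_of_le ha (hlow l)
  intro b hb
  set δ := (b - m) / 2 with hδ_def
  have hδ : 0 < δ := by linarith
  set c := (ν (Set.Ico m (m + δ / 2))).toReal with hc_def
  have hc : 0 < c := by
    refine ENNReal.toReal_pos ?_ (measure_ne_top ν _)
    intro hzero
    have hIoo : ν (Set.Ioo (m - 1) (m + δ / 2)) ≠ 0 :=
      hm_mem _ (Ioo_mem_nhds (by linarith) (by linarith))
    apply hIoo
    have hsub2 : Set.Ioo (m - 1) (m + δ / 2) ⊆ Set.Iio m ∪ Set.Ico m (m + δ / 2) := by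
      intro x hx
      rcases lt_or_ge x m with h' | h'
      · exact Or.inl h'
      · exact Or.inr ⟨h', hx.2⟩
    exact measure_mono_null hsub2 (measure_union_null hIio hzero)
  have key : ∀ l : ℝ, l ≤ 0 →
      (∫ x, x * Real.exp (l * x) ∂ν) / (∫ x, Real.exp (l * x) ∂ν) ≤
        m + δ + Real.exp (l * (δ / 2)) / c := by
    intro l hl0
    have hDge : c * Real.exp (l * (m + δ / 2)) ≤ ∫ x, Real.exp (l * x) ∂ν := by
      have h1 : Real.exp (l * (m + δ / 2)) * (ν (Set.Ico m (m + δ / 2))).toReal ≤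
          ∫ x in Set.Ico m (m + δ / 2), Real.exp (l * x) ∂ν := by
        apply setIntegral_ge_of_const_le_real measurableSet_Ico (measure_ne_top ν _)
        · intro x hx
          exact Real.exp_le_exp.2 (mul_le_mul_of_nonpos_left hx.2.le hl0)
        · exact (int_exp' h0 l).integrableOn
      have h2 : ∫ x in Set.Ico m (m + δ / 2), Real.exp (l * x) ∂ν ≤
          ∫ x, Real.exp (l * x) ∂ν :=
        setIntegral_le_integral (int_exp' h0 l)
          (Eventually.of_forall fun x => (Real.exp_pos _).le)
      calc c * Real.exp (l * (m + δ / 2))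
          = Real.exp (l * (m + δ / 2)) * c := mul_comm _ _
        _ ≤ _ := le_trans h1 h2
    have hNle : (∫ x, x * Real.exp (l * x) ∂ν) ≤
        (m + δ) * (∫ x, Real.exp (l * x) ∂ν) + Real.exp (l * (m + δ)) := by
      have hint2 : Integrable
          (fun x => (m + δ) * Real.exp (l * x) + Real.exp (l * (m + δ))) ν :=
        ((int_exp' h0 l).const_mul (m + δ)).add (integrable_const _)
      have hle := integral_mono_ae (int_xexp' h0 l) hint2
        (((aux_ae h0).and hml).mono ?_)
      · rw [integral_add ((int_exp' h0 l).const_mul (m + δ)) (integrable_const _),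
          integral_const_mul, integral_const, probReal_univ] at hle
        simpa using hle
      · rintro x ⟨⟨hx0, hx1⟩, hmx⟩
        show x * Real.exp (l * x) ≤ (m + δ) * Real.exp (l * x) + Real.exp (l * (m + δ))
        by_cases hxc : x ≤ m + δ
        · have h3 : x * Real.exp (l * x) ≤ (m + δ) * Real.exp (l * x) :=
            mul_le_mul_of_nonneg_right hxc (Real.exp_pos _).le
          have h4 : (0:ℝ) ≤ Real.exp (l * (m + δ)) := (Real.exp_pos _).le
          linarith
        · push_neg at hxc
          have h3 : x * Real.exp (l * x) ≤ 1 * Real.exp (l * x) :=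
            mul_le_mul_of_nonneg_right hx1 (Real.exp_pos _).le
          have h4 : Real.exp (l * x) ≤ Real.exp (l * (m + δ)) :=
            Real.exp_le_exp.2 (mul_le_mul_of_nonpos_left hxc.le hl0)
          have h5 : (0:ℝ) ≤ (m + δ) * Real.exp (l * x) := by positivity
          linarith
    rw [div_le_iff₀ (hD l)]
    have hE : Real.exp (l * (m + δ)) ≤
        (Real.exp (l * (δ / 2)) / c) * (∫ x, Real.exp (l * x) ∂ν) := by
      have h6 : (Real.exp (l * (δ / 2)) / c) * (c * Real.exp (l * (m + δ / 2))) ≤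
          (Real.exp (l * (δ / 2)) / c) * (∫ x, Real.exp (l * x) ∂ν) :=
        mul_le_mul_of_nonneg_left hDge (by positivity)
      have h7 : (Real.exp (l * (δ / 2)) / c) * (c * Real.exp (l * (m + δ / 2))) =
          Real.exp (l * (m + δ)) := by
        rw [div_mul_eq_mul_div, mul_comm c _, ← mul_assoc, mul_div_assoc, div_self hc.ne',
          mul_one, ← Real.exp_add]
        congr 1
        ring
      rw [h7] at h6
      exact h6
    calc (∫ x, x * Real.exp (l * x) ∂ν)
        ≤ (m + δ) * (∫ x, Real.exp (l * x) ∂ν) + Real.exp (l * (m + δ)) := hNle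
      _ ≤ (m + δ) * (∫ x, Real.exp (l * x) ∂ν) +
          (Real.exp (l * (δ / 2)) / c) * (∫ x, Real.exp (l * x) ∂ν) := by linarith
      _ = (m + δ + Real.exp (l * (δ / 2)) / c) * (∫ x, Real.exp (l * x) ∂ν) := by ring
  have htend : Tendsto (fun l : ℝ => m + δ + Real.exp (l * (δ / 2)) / c) atBot
      (nhds (m + δ + 0)) := by
    refine tendsto_const_nhds.add ?_
    have h1 : Tendsto (fun l : ℝ => l * (δ / 2)) atBot atBot :=
      tendsto_id.atBot_mul_const (by positivity)
    have h2 : Tendsto (fun l : ℝ => Real.exp (l * (δ / 2))) atBot (nhds 0) :=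
      Real.tendsto_exp_atBot.comp h1
    simpa using h2.div_const c
  have hlt : ∀ᶠ l : ℝ in atBot, m + δ + Real.exp (l * (δ / 2)) / c < b :=
    htend.eventually (gt_mem_nhds (by linarith))
  filter_upwards [eventually_le_atBot (0:ℝ), hlt] with l hl0 hblt
  exact lt_of_le_of_lt (key l hl0) hblt

end
end

section
/- Let ν be a Borel probability measure on [0,1] and m(ν) the minimum of its closed support. Then φ*_ν(m(ν)) = − ln ν({m(ν)}), i.e., sup_{λ∈ℝ} ( λ·m(ν) − φ_ν(λ) ) = − ln ν({m(ν)}), with the convention that the right-hand side equals +∞ when ν({m(ν)}) = 0. -/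
open MeasureTheory Filter Set ProbabilityTheory
open scoped ENNReal NNReal

noncomputable section

lemma my_neg_iInf {ι : Sort*} (f : ι → EReal) : (⨆ i, -(f i)) = -⨅ i, f i := by
  refine le_antisymm (iSup_le fun i => EReal.neg_le_neg_iff.mpr (iInf_le _ i)) ?_
  rw [EReal.neg_le]
  exact le_iInf fun i => EReal.neg_le.mpr (le_iSup (fun i => -(f i)) i)

lemma my_coe_sub_coe_add (c : ℝ) (b : EReal) : (c : EReal) - ((c : EReal) + b) = -b := by
  induction b with
  | bot => simp
  | coe b =>
      norm_cast
      ring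
  | top => simp

/-- For a Borel probability measure `ν` on `[0,1]` with `m(ν)` the minimum of its closed
support: `φ*_ν(m(ν)) = sup_λ (λ·m(ν) − φ_ν(λ)) = − ln ν({m(ν)})`, with the convention that
the right-hand side equals `+∞` when `ν({m(ν)}) = 0`. -/
theorem phiStar_at_mMin (ν : Measure ℝ) (hν : ν ∈ Pcc) :
    phiStar ν (mMin ν) = - ENNReal.log (ν {mMin ν}) := by
  obtain ⟨hprob, hcc⟩ := hν
  set m := mMin ν with hm
  -- the support is contained in [0,1]
  have hsub : msupport ν ⊆ Set.Icc (0:ℝ) 1 := by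
    intro x hx
    by_contra hxI
    exact hx ((Set.Icc (0:ℝ) 1)ᶜ) (isClosed_Icc.isOpen_compl.mem_nhds hxI) hcc
  have hbdd : BddBelow (msupport ν) := ⟨0, fun x hx => (hsub hx).1⟩
  -- the mass strictly below `m` is zero
  have hIio : ν (Set.Iio m) = 0 := by
    apply measure_null_of_locally_null
    intro x hx
    have hxns : x ∉ msupport ν := fun hmem => absurd (csInf_le hbdd hmem) (not_le.mpr hx)
    simp only [msupport, Set.mem_setOf_eq] at hxns
    push_neg at hxns
    obtain ⟨U, hU, hU0⟩ := hxns
    exact ⟨U, mem_nhdsWithin_of_mem_nhds hU, hU0⟩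
  have hae : ∀ᵐ x ∂ν, m ≤ x := by
    rw [ae_iff]
    simpa only [not_le, ← Set.Iio_def] using hIio
  -- the recentered moment generating function
  set f : ℝ → ℝ≥0∞ := fun l => ∫⁻ x, ENNReal.ofReal (Real.exp (l * (x - m))) ∂ν with hf
  have hmeas : ∀ l : ℝ, Measurable fun x : ℝ => ENNReal.ofReal (Real.exp (l * (x - m))) :=
    fun l => ENNReal.measurable_ofReal.comp (Real.measurable_exp.comp
      (measurable_const.mul (measurable_id.sub measurable_const)))
  have hlog : ∀ l : ℝ, logMgf ν l = ((l * m : ℝ) : EReal) + ENNReal.log (f l) := by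
    intro l
    have h1 : ∀ x : ℝ, ENNReal.ofReal (Real.exp (l * x)) =
        ENNReal.ofReal (Real.exp (l * m)) * ENNReal.ofReal (Real.exp (l * (x - m))) := by
      intro x
      rw [← ENNReal.ofReal_mul (Real.exp_pos _).le, ← Real.exp_add]
      congr 2
      ring
    unfold logMgf
    rw [lintegral_congr h1]
    rw [lintegral_const_mul _ (hmeas l), ENNReal.log_mul_add,
      ENNReal.log_ofReal_of_pos (Real.exp_pos _), Real.log_exp]
  have hps : phiStar ν m = ⨆ l : ℝ, -(ENNReal.log (f l)) := by
    unfold phiStar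
    exact iSup_congr fun l => by rw [hlog l, my_coe_sub_coe_add]
  -- lower bound : each `f l` dominates the mass of `{m}`
  have hub : ∀ l : ℝ, ν {m} ≤ f l := by
    intro l
    have h1 : ν {m} = ∫⁻ x, Set.indicator {m} (1 : ℝ → ℝ≥0∞) x ∂ν := by
      rw [lintegral_indicator_one (measurableSet_singleton m)]
    rw [h1, hf]
    apply lintegral_mono
    intro x
    by_cases hx : x = m
    · subst hx
      simp
    · simp [hx]
  -- the auxiliary antitone sequence
  set g : ℕ → ℝ → ℝ≥0∞ :=
    fun n x => ENNReal.ofReal (Real.exp (-(n:ℝ) * max (x - m) 0)) with hg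
  have hgmeas : ∀ n, Measurable (g n) := fun n =>
    ENNReal.measurable_ofReal.comp (Real.measurable_exp.comp
      (measurable_const.mul ((measurable_id.sub measurable_const).max measurable_const)))
  have hganti : Antitone g := by
    intro n k hnk
    intro x
    apply ENNReal.ofReal_le_ofReal
    apply Real.exp_le_exp.mpr
    have h0 : 0 ≤ max (x - m) 0 := le_max_right _ _
    have hnk' : (n : ℝ) ≤ k := Nat.cast_le.mpr hnk
    nlinarith
  have hfg : ∀ n : ℕ, f (-(n:ℝ)) = ∫⁻ x, g n x ∂ν := by
    intro n
    apply lintegral_congr_ae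
    filter_upwards [hae] with x hx
    simp only [hf, hg]
    rw [max_eq_left (sub_nonneg.mpr hx)]
  have hg0 : ∫⁻ x, g 0 x ∂ν = 1 := by
    simp only [hg, Nat.cast_zero, neg_zero, zero_mul, Real.exp_zero, ENNReal.ofReal_one]
    rw [lintegral_one, measure_univ]
  have hiInfg : ∫⁻ x, ⨅ n, g n x ∂ν = ⨅ n, ∫⁻ x, g n x ∂ν :=
    lintegral_iInf hgmeas hganti (by rw [hg0]; exact ENNReal.one_ne_top)
  have hptw : ∀ x : ℝ, (⨅ n, g n x) = Set.indicator (Set.Iic m) (1 : ℝ → ℝ≥0∞) x := by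
    intro x
    by_cases hx : x ≤ m
    · have hmax : max (x - m) 0 = 0 := max_eq_right (sub_nonpos.mpr hx)
      simp [hg, hmax, hx]
    · have hmax : max (x - m) 0 = x - m := max_eq_left (by linarith [not_le.mp hx])
      have ht : 0 < x - m := by linarith [not_le.mp hx]
      rw [Set.indicator_of_notMem (by simpa using hx)]
      have htend : Filter.Tendsto (fun n : ℕ => g n x) Filter.atTop (nhds 0) := by
        simp only [hg, hmax]
        have h2 : Filter.Tendsto (fun n : ℕ => Real.exp (-(n:ℝ) * (x - m)))
            Filter.atTop (nhds 0) := by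
          apply Real.tendsto_exp_atBot.comp
          have h3 : Filter.Tendsto (fun n : ℕ => (n:ℝ) * (x - m)) Filter.atTop Filter.atTop :=
            Filter.Tendsto.atTop_mul_const ht tendsto_natCast_atTop_atTop
          simpa only [neg_mul, Function.comp_def] using tendsto_neg_atTop_atBot.comp h3
        simpa only [ENNReal.ofReal_zero] using ENNReal.tendsto_ofReal h2
      exact tendsto_nhds_unique
        (tendsto_atTop_iInf (fun n k hnk => hganti hnk x)) htend
  have hinf : (⨅ l : ℝ, f l) = ν {m} := by
    apply le_antisymm
    · calc (⨅ l : ℝ, f l) ≤ ⨅ n : ℕ, f (-(n:ℝ)) := le_iInf fun n => iInf_le _ _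
        _ = ⨅ n : ℕ, ∫⁻ x, g n x ∂ν := iInf_congr hfg
        _ = ∫⁻ x, ⨅ n, g n x ∂ν := hiInfg.symm
        _ = ∫⁻ x, Set.indicator (Set.Iic m) (1 : ℝ → ℝ≥0∞) x ∂ν :=
            lintegral_congr fun x => hptw x
        _ = ν (Set.Iic m) := lintegral_indicator_one measurableSet_Iic
        _ = ν {m} := by
            have hIic : Set.Iic m = {m} ∪ Set.Iio m := by
              ext y
              simp [le_iff_lt_or_eq, or_comm]
            rw [hIic]
            exact le_antisymm ((measure_union_le _ _).trans
              (by rw [hIio, add_zero])) (measure_mono Set.subset_union_left)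
    · exact le_iInf hub
  rw [hps, my_neg_iInf]
  congr 1
  calc (⨅ l : ℝ, ENNReal.log (f l)) = ENNReal.log (⨅ l : ℝ, f l) :=
        (OrderIso.map_iInf ENNReal.logOrderIso f).symm
    _ = ENNReal.log (ν {m}) := by rw [hinf]

end
end

section
/- Let ρ be a nonzero σ-finite measure on ℝ not concentrated on a single point, such that the natural parameter set Θ = {θ ∈ ℝ : ∫ e^{θy} dρ(y) < ∞} is a nonempty open interval. For θ ∈ Θ set b(θ) = ln ∫ e^{θy} dρ(y), and let ν_θ be the probability measure with density y ↦ e^{θy − b(θ)} with respect to ρ. Then b is differentiable on Θ with b'(θ) = E(ν_θ), and for all θ1, θ2 ∈ Θ: φ*_{ν_{θ1}}(b'(θ2)) = KL(ν_{θ2}, ν_{θ1}) = (θ2 − θ1)·b'(θ2) − ( b(θ2) − b(θ1) ). -/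
open MeasureTheory Filter Set ProbabilityTheory
open scoped ENNReal NNReal

noncomputable section

private lemma exp_mid_le {a c b y : ℝ} (hac : a ≤ c) (hcb : c ≤ b) :
    Real.exp (c * y) ≤ Real.exp (a * y) + Real.exp (b * y) := by
  rcases le_or_gt 0 y with hy | hy
  · have h : c * y ≤ b * y := mul_le_mul_of_nonneg_right hcb hy
    exact le_add_of_nonneg_of_le (Real.exp_pos _).le (Real.exp_le_exp.2 h)
  · have h : c * y ≤ a * y := mul_le_mul_of_nonpos_right hac hy.le
    exact le_add_of_le_of_nonneg (Real.exp_le_exp.2 h) (Real.exp_pos _).le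

private lemma integrable_exp_mid {ρ : Measure ℝ} {a c b : ℝ} (hac : a ≤ c) (hcb : c ≤ b)
    (ha : Integrable (fun y => Real.exp (a * y)) ρ)
    (hb : Integrable (fun y => Real.exp (b * y)) ρ) :
    Integrable (fun y => Real.exp (c * y)) ρ := by
  refine (ha.add hb).mono (Real.measurable_exp.comp (measurable_id.const_mul c)).aestronglyMeasurable (ae_of_all _ fun y => ?_)
  rw [Real.norm_eq_abs, abs_of_nonneg (Real.exp_pos _).le, Real.norm_eq_abs]
  exact (exp_mid_le hac hcb).trans (le_abs_self _)

private lemma hasDerivAt_integral_exp {ρ : Measure ℝ} {θ0 ε : ℝ} (hε : 0 < ε)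
    (h1 : Integrable (fun y => Real.exp ((θ0 - 2*ε) * y)) ρ)
    (h2 : Integrable (fun y => Real.exp ((θ0 + 2*ε) * y)) ρ) :
    Integrable (fun y => y * Real.exp (θ0 * y)) ρ ∧
      HasDerivAt (fun θ => ∫ y, Real.exp (θ * y) ∂ρ) (∫ y, y * Real.exp (θ0 * y) ∂ρ) θ0 := by
  have key := hasDerivAt_integral_of_dominated_loc_of_deriv_le (μ := ρ) (x₀ := θ0)
      (F := fun θ y => Real.exp (θ * y)) (F' := fun θ y => y * Real.exp (θ * y))
      (bound := fun y => ε⁻¹ * (Real.exp ((θ0 - 2*ε)*y) + Real.exp ((θ0 + 2*ε)*y)))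
      (Metric.ball_mem_nhds θ0 hε)
      (Eventually.of_forall fun θ => (Real.measurable_exp.comp (measurable_id.const_mul θ)).aestronglyMeasurable)
      (integrable_exp_mid (by linarith) (by linarith) h1 h2)
      ((measurable_id.mul (Real.measurable_exp.comp (measurable_id.const_mul θ0))).aestronglyMeasurable)
      ?_ ((h1.add h2).const_mul _) ?_
  · exact key
  · refine ae_of_all _ fun y θ hθ => ?_
    have hmem : |θ - θ0| < ε := by rwa [Metric.mem_ball, Real.dist_eq] at hθ
    obtain ⟨hm1, hm2⟩ := abs_lt.1 hmem
    have hy1 : |y| ≤ ε⁻¹ * Real.exp (ε * |y|) := by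
      have h := Real.add_one_le_exp (ε * |y|)
      rw [le_inv_mul_iff₀ hε]
      linarith
    have habs : Real.exp (ε * |y| + θ * y)
        ≤ Real.exp ((θ0 - 2*ε)*y) + Real.exp ((θ0 + 2*ε)*y) := by
      rcases le_or_gt 0 y with hy | hy
      · rw [abs_of_nonneg hy, show ε * y + θ * y = (θ + ε) * y by ring]
        exact exp_mid_le (by linarith) (by linarith)
      · rw [abs_of_neg hy, show ε * (-y) + θ * y = (θ - ε) * y by ring]
        exact exp_mid_le (by linarith) (by linarith)
    calc ‖y * Real.exp (θ * y)‖ = |y| * Real.exp (θ * y) := by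
          rw [Real.norm_eq_abs, abs_mul, abs_of_nonneg (Real.exp_pos _).le]
      _ ≤ (ε⁻¹ * Real.exp (ε * |y|)) * Real.exp (θ * y) :=
          mul_le_mul_of_nonneg_right hy1 (Real.exp_pos _).le
      _ = ε⁻¹ * Real.exp (ε * |y| + θ * y) := by rw [Real.exp_add]; ring
      _ ≤ ε⁻¹ * (Real.exp ((θ0 - 2*ε)*y) + Real.exp ((θ0 + 2*ε)*y)) :=
          mul_le_mul_of_nonneg_left habs (inv_nonneg.2 hε.le)
  · refine ae_of_all _ fun y θ _ => ?_
    simpa [mul_comm] using (hasDerivAt_mul_const (x := θ) y).exp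



/-- Canonical one-parameter exponential family. Let `ρ` be a nonzero σ-finite measure on ℝ,
not concentrated on a single point, whose natural parameter set
`Θ = {θ : ∫ e^{θy} dρ(y) < ∞}` is a nonempty open interval. With `b(θ) = ln ∫ e^{θy} dρ(y)`
and `ν_θ = e^{θ·y − b(θ)} dρ`, the function `b` is differentiable on `Θ` with
`b'(θ) = E(ν_θ)`, and for all `θ1, θ2 ∈ Θ`:
`φ*_{ν_{θ1}}(b'(θ2)) = KL(ν_{θ2}, ν_{θ1}) = (θ2 − θ1)·b'(θ2) − (b(θ2) − b(θ1))`. -/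
theorem exponential_family_b_deriv_and_KL
    (ρ : Measure ℝ) [SigmaFinite ρ] (hρ : ρ ≠ 0)
    (hnotpoint : ∀ x : ℝ, ρ {x}ᶜ ≠ 0)
    (Θ : Set ℝ) (hΘ : Θ = {θ : ℝ | Integrable (fun y => Real.exp (θ * y)) ρ})
    (hopen : IsOpen Θ) (hne : Θ.Nonempty) (hconn : Set.OrdConnected Θ)
    (b : ℝ → ℝ) (hb : ∀ θ, b θ = Real.log (∫ y, Real.exp (θ * y) ∂ρ))
    (ν : ℝ → Measure ℝ)
    (hν : ∀ θ, ν θ = ρ.withDensity (fun y => ENNReal.ofReal (Real.exp (θ * y - b θ)))) :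
    (∀ θ ∈ Θ, HasDerivAt b (Emean (ν θ)) θ) ∧
    ∀ θ1 ∈ Θ, ∀ θ2 ∈ Θ,
      phiStar (ν θ1) (Emean (ν θ2)) = (KL (ν θ2) (ν θ1) : EReal) ∧
      (KL (ν θ2) (ν θ1) : EReal)
        = (((θ2 - θ1) * Emean (ν θ2) - (b θ2 - b θ1) : ℝ) : EReal) := by
  haveI : NeZero ρ := ⟨hρ⟩
  have hmem : ∀ {θ : ℝ}, θ ∈ Θ → Integrable (fun y => Real.exp (θ * y)) ρ := by
    intro θ h; rwa [hΘ] at h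
  have hFpos : ∀ θ ∈ Θ, 0 < ∫ y, Real.exp (θ * y) ∂ρ := fun θ h => integral_exp_pos (hmem h)
  have hexpb : ∀ θ ∈ Θ, Real.exp (b θ) = ∫ y, Real.exp (θ * y) ∂ρ := fun θ h => by
    rw [hb]; exact Real.exp_log (hFpos θ h)
  -- ν θ is the tilted measure
  have hνt : ∀ θ ∈ Θ, ν θ = ρ.tilted (fun y => θ * y) := by
    intro θ hθ
    rw [hν, Measure.tilted]
    congr 1
    funext y
    rw [Real.exp_sub, hexpb θ hθ]
  have hprob : ∀ θ ∈ Θ, IsProbabilityMeasure (ν θ) := fun θ hθ => by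
    rw [hνt θ hθ]; exact isProbabilityMeasure_tilted (hmem hθ)
  -- derivative of the partition function
  have hDer : ∀ θ ∈ Θ, Integrable (fun y => y * Real.exp (θ * y)) ρ ∧
      HasDerivAt (fun t => ∫ y, Real.exp (t * y) ∂ρ) (∫ y, y * Real.exp (θ * y) ∂ρ) θ := by
    intro θ hθ
    obtain ⟨δ, hδ, hball⟩ := Metric.isOpen_iff.1 hopen θ hθ
    have hball' : ∀ c : ℝ, |c - θ| < δ → Integrable (fun y => Real.exp (c * y)) ρ := by
      intro c hc
      exact hmem (hball (by rwa [Metric.mem_ball, Real.dist_eq]))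
    refine hasDerivAt_integral_exp (ε := δ/3) (by linarith) ?_ ?_
    · refine hball' _ ?_
      rw [show θ - 2*(δ/3) - θ = -(2*(δ/3)) by ring, abs_neg, abs_of_pos (by linarith)]
      linarith
    · refine hball' _ ?_
      rw [show θ + 2*(δ/3) - θ = 2*(δ/3) by ring, abs_of_pos (by linarith)]
      linarith
  -- integrability with respect to tilted measures
  have htiltInt : ∀ θ ∈ Θ, ∀ g : ℝ → ℝ,
      Integrable (fun y => Real.exp (θ * y) * g y) ρ → Integrable g (ν θ) := by
    intro θ hθ g hg
    rw [hνt θ hθ, tilted_eq_withDensity_nnreal]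
    have hm : AEMeasurable (β := ℝ≥0) (fun x =>
        (NNReal.mk (Real.exp (θ * x) / ∫ x, Real.exp (θ * x) ∂ρ) (by positivity) : ℝ≥0)) ρ := by
      rw [← aemeasurable_coe_nnreal_real_iff]
      simp only [NNReal.coe_mk]
      exact ((Real.measurable_exp.comp (measurable_id.const_mul θ)).div_const _).aemeasurable
    rw [integrable_withDensity_iff_integrable_smul₀ hm]
    simp only [NNReal.smul_def, NNReal.coe_mk, smul_eq_mul]
    have heq : (fun x => Real.exp (θ * x) / (∫ x, Real.exp (θ * x) ∂ρ) * g x)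
        = fun x => (∫ x, Real.exp (θ * x) ∂ρ)⁻¹ * (Real.exp (θ * x) * g x) := by
      funext x; ring
    rw [heq]
    exact hg.const_mul _
  have hEint : ∀ θ ∈ Θ, Integrable (fun x => x) (ν θ) := by
    intro θ hθ
    refine htiltInt θ hθ _ ?_
    have heq : (fun y => Real.exp (θ * y) * y) = fun y => y * Real.exp (θ * y) := by
      funext y; ring
    rw [heq]; exact (hDer θ hθ).1
  have hExpInt : ∀ θ ∈ Θ, ∀ c : ℝ, (θ + c) ∈ Θ →
      Integrable (fun x => Real.exp (c * x)) (ν θ) := by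
    intro θ hθ c hc
    refine htiltInt θ hθ _ ?_
    have heq : (fun y => Real.exp (θ * y) * Real.exp (c * y))
        = fun y => Real.exp ((θ + c) * y) := by
      funext y; rw [← Real.exp_add]; ring_nf
    rw [heq]; exact hmem hc
  -- Emean of tilted measure
  have hEmean : ∀ θ ∈ Θ, Emean (ν θ)
      = (∫ y, y * Real.exp (θ * y) ∂ρ) / (∫ y, Real.exp (θ * y) ∂ρ) := by
    intro θ hθ
    rw [Emean, hνt θ hθ, integral_tilted]
    simp only [smul_eq_mul]
    rw [show (fun x => Real.exp (θ * x) / (∫ x, Real.exp (θ * x) ∂ρ) * x)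
        = fun x => (x * Real.exp (θ * x)) * (∫ x, Real.exp (θ * x) ∂ρ)⁻¹ from by
        funext x; ring]
    rw [integral_mul_const, div_eq_mul_inv]
  -- derivative of b
  have hDb : ∀ θ ∈ Θ, HasDerivAt b (Emean (ν θ)) θ := by
    intro θ hθ
    have hbf : b = fun t => Real.log (∫ y, Real.exp (t * y) ∂ρ) := funext hb
    rw [hbf, hEmean θ hθ]
    exact ((hDer θ hθ).2).log (hFpos θ hθ).ne'
  -- integral of exp under tilted measure
  have hsum : ∀ θ θ' : ℝ, ((fun y => θ * y) + fun y => (θ' - θ) * y) = fun y => θ' * y := by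
    intro θ θ'; funext y; simp only [Pi.add_apply]; ring
  have hIexp : ∀ θ ∈ Θ, ∀ θ' ∈ Θ, ∫ x, Real.exp ((θ' - θ) * x) ∂(ν θ)
      = (∫ y, Real.exp (θ' * y) ∂ρ) / (∫ y, Real.exp (θ * y) ∂ρ) := by
    intro θ hθ θ' hθ'
    rw [hνt θ hθ, integral_exp_tilted, hsum θ θ']
  -- Jensen / convexity inequality
  have hJensen : ∀ θ ∈ Θ, ∀ θ' ∈ Θ, (θ' - θ) * Emean (ν θ) ≤ b θ' - b θ := by
    intro θ hθ θ' hθ'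
    haveI := hprob θ hθ
    have hfi : Integrable (fun x => (θ' - θ) * x) (ν θ) := (hEint θ hθ).const_mul _
    have hgi : Integrable (fun x => Real.exp ((θ' - θ) * x)) (ν θ) :=
      hExpInt θ hθ (θ' - θ) (by rwa [show θ + (θ' - θ) = θ' by ring])
    have hJ := (convexOn_exp).map_integral_le (μ := ν θ) (f := fun x => (θ' - θ) * x)
      Real.continuous_exp.continuousOn isClosed_univ
      (ae_of_all _ fun _ => mem_univ _) hfi (by exact hgi)
    rw [hIexp θ hθ θ' hθ'] at hJ
    have hint : (θ' - θ) * Emean (ν θ) = ∫ x, (θ' - θ) * x ∂ν θ := by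
      rw [Emean, ← integral_const_mul]
    have : Real.exp ((θ' - θ) * Emean (ν θ)) ≤ Real.exp (b θ' - b θ) := by
      rw [Real.exp_sub, hexpb θ hθ, hexpb θ' hθ', hint]
      exact hJ
    exact Real.exp_le_exp.1 this
  -- KL formula
  have hKLeq : ∀ θ1 ∈ Θ, ∀ θ2 ∈ Θ, KL (ν θ2) (ν θ1)
      = ENNReal.ofReal ((θ2 - θ1) * Emean (ν θ2) - (b θ2 - b θ1)) := by
    intro θ1 h1 θ2 h2
    haveI := hprob θ2 h2
    have h21 : ν θ2 = (ν θ1).tilted (fun y => (θ2 - θ1) * y) := by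
      rw [hνt θ1 h1, hνt θ2 h2, tilted_tilted (hmem h1), hsum θ1 θ2]
    have hac : ν θ2 ≪ ν θ1 := h21 ▸ tilted_absolutelyContinuous _ _
    have hgint : Integrable (fun x => Real.exp ((θ2 - θ1) * x)) (ν θ1) :=
      hExpInt θ1 h1 (θ2 - θ1) (by rwa [show θ1 + (θ2 - θ1) = θ2 by ring])
    haveI := hprob θ1 h1
    have hlogae : (fun x => Real.log (((ν θ2).rnDeriv (ν θ1) x).toReal))
        =ᵐ[ν θ1] fun x => (θ2 - θ1) * x - (b θ2 - b θ1) := by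
      have h := log_rnDeriv_tilted_left_self (μ := ν θ1) hgint
      rw [← h21] at h
      refine h.trans (ae_of_all _ fun x => ?_)
      congr 1
      rw [hIexp θ1 h1 θ2 h2, Real.log_div (hFpos θ2 h2).ne' (hFpos θ1 h1).ne', hb θ2, hb θ1]
    have hlogae2 : (fun x => Real.log (((ν θ2).rnDeriv (ν θ1) x).toReal))
        =ᵐ[ν θ2] fun x => (θ2 - θ1) * x - (b θ2 - b θ1) := hlogae.filter_mono hac.ae_le
    have hintR : Integrable (fun x => (θ2 - θ1) * x - (b θ2 - b θ1)) (ν θ2) :=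
      ((hEint θ2 h2).const_mul _).sub (integrable_const _)
    have hintL : Integrable (fun x => Real.log (((ν θ2).rnDeriv (ν θ1) x).toReal)) (ν θ2) :=
      hintR.congr hlogae2.symm
    rw [KL, if_pos ⟨hac, hintL⟩]
    congr 1
    rw [integral_congr_ae hlogae2,
      integral_sub ((hEint θ2 h2).const_mul _) (integrable_const _),
      integral_const_mul, integral_const, probReal_univ, one_smul, Emean]
  -- log mgf of tilted measure
  have hLi : ∀ θ1 ∈ Θ, ∀ l : ℝ, (∫⁻ x, ENNReal.ofReal (Real.exp (l * x)) ∂(ν θ1))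
      = (∫⁻ x, ENNReal.ofReal (Real.exp ((θ1 + l) * x)) ∂ρ)
        * ENNReal.ofReal ((∫ y, Real.exp (θ1 * y) ∂ρ)⁻¹) := by
    intro θ1 h1 l
    rw [hνt θ1 h1, lintegral_tilted]
    rw [show (fun x => ENNReal.ofReal (Real.exp (θ1 * x) / ∫ x, Real.exp (θ1 * x) ∂ρ)
        * ENNReal.ofReal (Real.exp (l * x)))
        = fun x => ENNReal.ofReal (Real.exp ((θ1 + l) * x))
          * ENNReal.ofReal ((∫ y, Real.exp (θ1 * y) ∂ρ)⁻¹) from ?_]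
    · exact lintegral_mul_const'' _ (Real.measurable_exp.comp
        (measurable_id.const_mul _)).ennreal_ofReal.aemeasurable
    · funext x
      rw [← ENNReal.ofReal_mul (by positivity), ← ENNReal.ofReal_mul (Real.exp_pos _).le]
      congr 1
      rw [div_mul_eq_mul_div, ← Real.exp_add, div_eq_mul_inv]
      ring_nf
  have hMgfA : ∀ θ1 ∈ Θ, ∀ l : ℝ, (θ1 + l) ∈ Θ →
      logMgf (ν θ1) l = ((b (θ1 + l) - b θ1 : ℝ) : EReal) := by
    intro θ1 h1 l hl
    rw [logMgf, hLi θ1 h1 l,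
      ← ofReal_integral_eq_lintegral_ofReal (hmem hl) (ae_of_all _ fun x => (Real.exp_pos _).le),
      ← ENNReal.ofReal_mul (hFpos _ hl).le,
      ENNReal.log_ofReal_of_pos (mul_pos (hFpos _ hl) (inv_pos.2 (hFpos θ1 h1)))]
    rw [Real.log_mul (hFpos _ hl).ne' (inv_pos.2 (hFpos θ1 h1)).ne', Real.log_inv, hb (θ1 + l), hb θ1]
    rfl
  have hMgfB : ∀ θ1 ∈ Θ, ∀ l : ℝ, (θ1 + l) ∉ Θ → logMgf (ν θ1) l = ⊤ := by
    intro θ1 h1 l hl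
    have hni : ¬ Integrable (fun y => Real.exp ((θ1 + l) * y)) ρ := by rwa [hΘ] at hl
    have htop : (∫⁻ x, ENNReal.ofReal (Real.exp ((θ1 + l) * x)) ∂ρ) = ⊤ := by
      by_contra h
      refine hni ⟨(Real.measurable_exp.comp (measurable_id.const_mul _)).aestronglyMeasurable, ?_⟩
      rw [hasFiniteIntegral_iff_ofReal (ae_of_all _ fun x => (Real.exp_pos _).le)]
      exact lt_top_iff_ne_top.2 h
    rw [logMgf, hLi θ1 h1 l, htop, ENNReal.top_mul, ENNReal.log_top]
    simp only [ne_eq, ENNReal.ofReal_eq_zero, not_le]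
    exact inv_pos.2 (hFpos θ1 h1)
  -- phiStar formula
  have hphi : ∀ θ1 ∈ Θ, ∀ θ2 ∈ Θ, phiStar (ν θ1) (Emean (ν θ2))
      = (((θ2 - θ1) * Emean (ν θ2) - (b θ2 - b θ1) : ℝ) : EReal) := by
    intro θ1 h1 θ2 h2
    rw [phiStar]
    apply le_antisymm
    · refine iSup_le fun l => ?_
      by_cases hl : (θ1 + l) ∈ Θ
      · rw [hMgfA θ1 h1 l hl, ← EReal.coe_sub, EReal.coe_le_coe_iff]
        have h := hJensen θ2 h2 (θ1 + l) hl
        nlinarith [h]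
      · rw [hMgfB θ1 h1 l hl, EReal.sub_top]
        exact bot_le
    · refine le_iSup_of_le (θ2 - θ1) ?_
      rw [hMgfA θ1 h1 (θ2 - θ1) (by rwa [show θ1 + (θ2 - θ1) = θ2 by ring]),
        show θ1 + (θ2 - θ1) = θ2 by ring, ← EReal.coe_sub, EReal.coe_le_coe_iff]
  -- assemble
  refine ⟨hDb, fun θ1 h1 θ2 h2 => ?_⟩
  have hV : 0 ≤ (θ2 - θ1) * Emean (ν θ2) - (b θ2 - b θ1) := by
    have h := hJensen θ2 h2 θ1 h1
    nlinarith [h]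
  have hcast : ((KL (ν θ2) (ν θ1) : ℝ≥0∞) : EReal)
      = (((θ2 - θ1) * Emean (ν θ2) - (b θ2 - b θ1) : ℝ) : EReal) := by
    rw [hKLeq θ1 h1 θ2 h2, EReal.coe_ennreal_ofReal, max_eq_left hV]
  exact ⟨(hphi θ1 h1 θ2 h2).trans hcast.symm, hcast⟩


end
end

section
/- Let D be a set of probability measures ν on ℝ such that ∫ e^{λx} dν(x) < ∞ for all λ ∈ ℝ and all ν ∈ D. Assume D is stable by exponential reweighting: for all ν ∈ D and λ ∈ ℝ, the measure ν_λ with density dν_λ/dν(x) = e^{λx} / ∫ e^{λy} dν(y) also belongs to D. Assume further that whenever ν ∈ D has a finite lower or upper support end x ∈ {m(ν), M(ν)} with ν({x}) > 0, the Dirac mass δ_x belongs to D. Then for every ν ∈ D: φ*_ν(x) = Linf≤(x,ν) for all x ≤ E(ν), and φ*_ν(x) = Linf≥(x,ν) for all x ≥ E(ν). -/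
open MeasureTheory Filter Set ProbabilityTheory
open scoped ENNReal NNReal

noncomputable section

/-- The exponentially tilted measure `ν_λ`, with density
`x ↦ e^{λx} / ∫ e^{λy} dν(y)` with respect to `ν`. -/
def tiltM (ν : Measure ℝ) (l : ℝ) : Measure ℝ :=
  ν.withDensity (fun x => ENNReal.ofReal (Real.exp (l * x) / ∫ y, Real.exp (l * y) ∂ν))

section Aux
open Real

lemma abs_le_exp_add_exp (x : ℝ) : |x| ≤ exp x + exp (-x) := by
  rcases le_or_gt 0 x with h | h
  · rw [abs_of_nonneg h]
    nlinarith [add_one_le_exp x, exp_nonneg (-x)]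
  · rw [abs_of_neg h]
    nlinarith [add_one_le_exp (-x), exp_nonneg x]

variable {ν ζ : Measure ℝ}

lemma integrable_id_of_exp (hint : ∀ l : ℝ, Integrable (fun x => exp (l * x)) ζ) :
    Integrable (fun x : ℝ => x) ζ := by
  refine ((hint 1).add (hint (-1))).mono measurable_id.aestronglyMeasurable ?_
  refine ae_of_all _ fun x => ?_
  simp only [Pi.add_apply, Real.norm_eq_abs]
  have h1 : exp (1 * x) + exp ((-1) * x) = exp x + exp (-x) := by norm_num
  rw [h1, abs_of_nonneg (by positivity : (0:ℝ) ≤ exp x + exp (-x))]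
  exact abs_le_exp_add_exp x

lemma integrable_mul_exp_of_exp (hint : ∀ l : ℝ, Integrable (fun x => exp (l * x)) ζ)
    (l : ℝ) : Integrable (fun x : ℝ => x * exp (l * x)) ζ := by
  refine ((hint (l+1)).add (hint (l-1))).mono
    (measurable_id.mul (measurable_id.const_mul l).exp).aestronglyMeasurable ?_
  refine ae_of_all _ fun x => ?_
  simp only [Pi.add_apply, Real.norm_eq_abs]
  have hpos : (0:ℝ) ≤ exp ((l+1) * x) + exp ((l-1) * x) := by positivity
  rw [abs_of_nonneg hpos, abs_mul, abs_exp]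
  calc |x| * exp (l * x) ≤ (exp x + exp (-x)) * exp (l * x) :=
        mul_le_mul_of_nonneg_right (abs_le_exp_add_exp x) (exp_pos _).le
    _ = exp ((l+1) * x) + exp ((l-1) * x) := by
        rw [add_mul, ← exp_add, ← exp_add]; ring_nf

lemma tiltM_eq_tilted (ν : Measure ℝ) (l : ℝ) : tiltM ν l = ν.tilted (fun x => l * x) := rfl

lemma logMgf_eq_log [NeZero ν] {l : ℝ} (hint1 : Integrable (fun x => exp (l * x)) ν) :
    logMgf ν l = ((Real.log (∫ x, exp (l * x) ∂ν) : ℝ) : EReal) := by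
  unfold logMgf
  rw [← ofReal_integral_eq_lintegral_ofReal hint1 (ae_of_all _ fun x => (exp_pos _).le),
    ENNReal.log_ofReal_of_pos (integral_exp_pos hint1)]

lemma phiStar_eq_iSup [NeZero ν] (hint : ∀ l : ℝ, Integrable (fun x => exp (l * x)) ν) (x : ℝ) :
    phiStar ν x = ⨆ l : ℝ, (((l * x - Real.log (∫ y, exp (l * y) ∂ν)) : ℝ) : EReal) := by
  unfold phiStar
  refine iSup_congr fun l => ?_
  rw [logMgf_eq_log (hint l), ← EReal.coe_sub]

end Aux
section Aux2
open Real

variable {ζ ρ ν : Measure ℝ} {l : ℝ}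

lemma KL_eq_integral_llr (h1 : ζ ≪ ν) (h2 : Integrable (llr ζ ν) ζ) :
    KL ζ ν = ENNReal.ofReal (∫ x, llr ζ ν x ∂ζ) := by
  unfold KL
  rw [if_pos ⟨h1, h2⟩]
  rfl

lemma KL_eq_top_of_not_ac (h1 : ¬ ζ ≪ ν) : KL ζ ν = ⊤ := by
  unfold KL
  rw [if_neg (by tauto)]

lemma KL_eq_top_of_not_int (h2 : ¬ Integrable (llr ζ ν) ζ) : KL ζ ν = ⊤ := by
  unfold KL
  rw [if_neg (by exact fun h => h2 h.2)]

lemma integral_llr_nonneg (hζ : IsProbabilityMeasure ζ) (hρ : IsProbabilityMeasure ρ)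
    (hac : ζ ≪ ρ) (h_int : Integrable (llr ζ ρ) ζ) : 0 ≤ ∫ x, llr ζ ρ x ∂ζ := by
  have hint2 : Integrable (fun x => (ρ.rnDeriv ζ x).toReal) ζ :=
    Measure.integrable_toReal_rnDeriv
  have hexpint : Integrable (fun x => exp (-llr ζ ρ x)) ζ :=
    hint2.congr (exp_neg_llr hac).symm
  have hjen : exp (∫ x, -llr ζ ρ x ∂ζ) ≤ ∫ x, exp (-llr ζ ρ x) ∂ζ := by
    have := convexOn_exp.map_integral_le (f := fun x => -llr ζ ρ x) (μ := ζ)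
      continuous_exp.continuousOn isClosed_univ (ae_of_all _ fun x => Set.mem_univ _)
      h_int.neg (by exact hexpint)
    simpa using this
  have h1 : ∫ x, exp (-llr ζ ρ x) ∂ζ ≤ 1 := by
    rw [integral_congr_ae (exp_neg_llr hac)]
    calc ∫ x, (ρ.rnDeriv ζ x).toReal ∂ζ
        = ∫ x in Set.univ, (ρ.rnDeriv ζ x).toReal ∂ζ := by rw [setIntegral_univ]
      _ ≤ (ρ Set.univ).toReal := Measure.setIntegral_toReal_rnDeriv_le (measure_ne_top ρ _)
      _ = 1 := by simp
  rw [integral_neg] at hjen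
  have := (exp_le_exp (x := -∫ x, llr ζ ρ x ∂ζ) (y := 0)).mp (by simpa using hjen.trans h1)
  linarith

lemma gibbs_ineq (hν : IsProbabilityMeasure ν) (hζ : IsProbabilityMeasure ζ)
    (hac : ζ ≪ ν) (hl : Integrable (fun x => exp (l * x)) ν)
    (hzid : Integrable (fun x : ℝ => x) ζ) (hllr : Integrable (llr ζ ν) ζ) :
    l * Emean ζ - Real.log (∫ x, exp (l * x) ∂ν) ≤ ∫ x, llr ζ ν x ∂ζ := by
  haveI : NeZero ν := ⟨hν.ne_zero⟩
  set f : ℝ → ℝ := fun x => l * x with hf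
  have hfζ : Integrable f ζ := hzid.const_mul l
  have hρ : IsProbabilityMeasure (ν.tilted f) := isProbabilityMeasure_tilted hl
  have hacρ : ζ ≪ ν.tilted f := hac.trans (absolutelyContinuous_tilted hl)
  have h_int : Integrable (llr ζ (ν.tilted f)) ζ :=
    integrable_llr_tilted_right hac hfζ hllr hl
  have h0 : 0 ≤ ∫ x, llr ζ (ν.tilted f) x ∂ζ := integral_llr_nonneg hζ hρ hacρ h_int
  have heq := integral_llr_tilted_right (μ := ζ) (ν := ν) hac hfζ hl hllr
  have hmean : ∫ x, f x ∂ζ = l * Emean ζ := by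
    simp only [hf]
    rw [integral_const_mul]
    rfl
  rw [heq, hmean] at h0
  linarith

end Aux2
section Aux3
open Real

variable {ν : Measure ℝ} {l x : ℝ}

lemma isProb_tiltM (hν : IsProbabilityMeasure ν)
    (hl : Integrable (fun x => exp (l * x)) ν) : IsProbabilityMeasure (tiltM ν l) := by
  haveI : NeZero ν := ⟨hν.ne_zero⟩
  rw [tiltM_eq_tilted]
  exact isProbabilityMeasure_tilted hl

lemma Emean_tiltM (hl : Integrable (fun x => exp (l * x)) ν)
    (hmul : Integrable (fun x => x * exp (l * x)) ν) :
    Emean (tiltM ν l) = (∫ x, x * exp (l * x) ∂ν) / ∫ x, exp (l * x) ∂ν := by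
  rw [tiltM_eq_tilted]
  unfold Emean
  rw [integral_tilted]
  simp only [smul_eq_mul]
  have h1 : ∀ y : ℝ, exp (l * y) / (∫ x, exp (l * x) ∂ν) * y
      = (∫ x, exp (l * x) ∂ν)⁻¹ * (y * exp (l * y)) := fun y => by ring
  simp only [h1]
  rw [integral_const_mul]
  ring

lemma llr_tiltM_ae (hν : IsProbabilityMeasure ν) (hl : Integrable (fun x => exp (l * x)) ν) :
    llr (tiltM ν l) ν =ᵐ[ν] fun x => l * x - Real.log (∫ x, exp (l * x) ∂ν) := by
  rw [tiltM_eq_tilted]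
  exact log_rnDeriv_tilted_left_self (f := fun x => l * x) hl

lemma KL_tiltM (hν : IsProbabilityMeasure ν) (hl : Integrable (fun x => exp (l * x)) ν)
    (hid : Integrable (fun x : ℝ => x) (tiltM ν l)) :
    KL (tiltM ν l) ν
      = ENNReal.ofReal (l * Emean (tiltM ν l) - Real.log (∫ x, exp (l * x) ∂ν)) := by
  haveI := isProb_tiltM hν hl
  have hac : tiltM ν l ≪ ν := by
    rw [tiltM_eq_tilted]; exact tilted_absolutelyContinuous ν _
  have hae : llr (tiltM ν l) ν =ᵐ[tiltM ν l]
      fun x => l * x - Real.log (∫ x, exp (l * x) ∂ν) := hac.ae_le (llr_tiltM_ae hν hl)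
  have hint : Integrable (llr (tiltM ν l) ν) (tiltM ν l) :=
    (((hid.const_mul l)).sub (integrable_const _)).congr hae.symm
  rw [KL_eq_integral_llr hac hint, integral_congr_ae hae, integral_sub (hid.const_mul l)
    (integrable_const _), integral_const, integral_const_mul]
  simp [Emean]

end Aux3
section Aux4
open Real

variable {ν : Measure ℝ}

lemma exp_mul_le_of_abs_sub_le {l l0 a : ℝ} (h : |l - l0| ≤ 1) :
    exp (l * a) ≤ exp ((l0 + 1) * a) + exp ((l0 - 1) * a) := by
  rcases le_or_gt 0 a with ha | ha
  · have : l * a ≤ (l0 + 1) * a := by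
      have := (abs_le.mp h).2
      nlinarith
    exact le_add_of_le_of_nonneg (exp_le_exp.mpr this) (exp_nonneg _)
  · have : l * a ≤ (l0 - 1) * a := by
      have := (abs_le.mp h).1
      nlinarith
    exact le_add_of_nonneg_of_le (exp_nonneg _) (exp_le_exp.mpr this)

lemma continuous_Z (hint : ∀ l : ℝ, Integrable (fun x => exp (l * x)) ν) :
    Continuous (fun l => ∫ x, exp (l * x) ∂ν) := by
  rw [continuous_iff_continuousAt]
  intro l0
  refine continuousAt_of_dominated (F := fun l x => exp (l * x))
    (bound := fun a => exp ((l0 + 1) * a) + exp ((l0 - 1) * a)) ?_ ?_ ?_ ?_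
  · exact Eventually.of_forall fun l => (hint l).1
  · refine eventually_of_mem (Metric.closedBall_mem_nhds l0 one_pos) fun l hl => ?_
    refine ae_of_all _ fun a => ?_
    rw [Real.norm_eq_abs, abs_exp]
    exact exp_mul_le_of_abs_sub_le (by simpa [Real.dist_eq] using hl)
  · exact (hint (l0 + 1)).add (hint (l0 - 1))
  · exact ae_of_all _ fun a => (continuous_exp.comp (continuous_id.mul continuous_const)).continuousAt

lemma continuous_N (hint : ∀ l : ℝ, Integrable (fun x => exp (l * x)) ν) :
    Continuous (fun l => ∫ x, x * exp (l * x) ∂ν) := by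
  rw [continuous_iff_continuousAt]
  intro l0
  refine continuousAt_of_dominated (F := fun l x => x * exp (l * x))
    (bound := fun a => exp ((l0 + 2) * a) + exp (l0 * a) + (exp (l0 * a) + exp ((l0 - 2) * a)))
    ?_ ?_ ?_ ?_
  · exact Eventually.of_forall fun l => (integrable_mul_exp_of_exp hint l).1
  · refine eventually_of_mem (Metric.closedBall_mem_nhds l0 one_pos) fun l hl => ?_
    refine ae_of_all _ fun a => ?_
    have hl' : |l - l0| ≤ 1 := by simpa [Real.dist_eq] using hl
    rw [Real.norm_eq_abs, abs_mul, abs_exp]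
    calc |a| * exp (l * a) ≤ (exp a + exp (-a)) * (exp ((l0+1) * a) + exp ((l0-1) * a)) :=
          mul_le_mul (abs_le_exp_add_exp a) (exp_mul_le_of_abs_sub_le hl') (exp_pos _).le
            (by positivity)
      _ = exp ((l0 + 2) * a) + exp (l0 * a) + (exp (l0 * a) + exp ((l0 - 2) * a)) := by
          rw [add_mul, mul_add, mul_add, ← exp_add, ← exp_add, ← exp_add, ← exp_add]
          ring_nf
  · exact (((hint (l0+2)).add (hint l0)).add ((hint l0).add (hint (l0-2))))
  · exact ae_of_all _ fun a => by
      exact (continuous_const.mul (continuous_exp.comp (continuous_id.mul continuous_const))).continuousAt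

lemma continuous_Emean_tiltM (hν : IsProbabilityMeasure ν)
    (hint : ∀ l : ℝ, Integrable (fun x => exp (l * x)) ν) :
    Continuous (fun l => Emean (tiltM ν l)) := by
  haveI : NeZero ν := ⟨hν.ne_zero⟩
  have h : (fun l => Emean (tiltM ν l))
      = fun l => (∫ x, x * exp (l * x) ∂ν) / ∫ x, exp (l * x) ∂ν := by
    funext l
    exact Emean_tiltM (hint l) (integrable_mul_exp_of_exp hint l)
  rw [h]
  exact (continuous_N hint).div (continuous_Z hint)
    fun l => (integral_exp_pos (hint l)).ne'

end Aux4
section Aux5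
open Real
open scoped Topology

variable {ν : Measure ℝ}

lemma tendsto_integral_exp_neg_nat (hν : IsProbabilityMeasure ν) {u : ℝ → ℝ}
    (hu : Measurable u) (hae : ∀ᵐ y ∂ν, 0 ≤ u y) :
    Tendsto (fun n : ℕ => ∫ y, exp (-(n : ℝ) * u y) ∂ν) atTop
      (𝓝 ((ν {y | u y = 0}).toReal)) := by
  have hmeas : MeasurableSet {y | u y = 0} := hu (measurableSet_singleton 0)
  have hlim : (ν {y | u y = 0}).toReal = ∫ y, Set.indicator {y | u y = 0} (1 : ℝ → ℝ) y ∂ν := by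
    rw [integral_indicator_one hmeas]; rfl
  rw [hlim]
  refine tendsto_integral_of_dominated_convergence (fun _ => (1:ℝ)) ?_ ?_ ?_ ?_
  · exact fun n => ((hu.const_mul _).exp).aestronglyMeasurable
  · exact integrable_const 1
  · intro n
    filter_upwards [hae] with y hy
    rw [Real.norm_eq_abs, abs_exp]
    apply exp_le_one_iff.mpr
    have : (0:ℝ) ≤ (n:ℝ) := Nat.cast_nonneg n
    nlinarith
  · filter_upwards [hae] with y hy
    rcases eq_or_lt_of_le hy with h0 | h0
    · simp only [← h0, mul_zero, exp_zero]
      have : y ∈ {y | u y = 0} := by simp [← h0]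
      rw [Set.indicator_of_mem this]
      exact tendsto_const_nhds
    · have : y ∉ {y | u y = 0} := by simp [h0.ne']
      rw [Set.indicator_of_notMem this]
      have h1 : Tendsto (fun n : ℕ => -(n:ℝ) * u y) atTop atBot := by
        apply Tendsto.atBot_mul_const h0
        exact tendsto_neg_atBot_iff.mpr tendsto_natCast_atTop_atTop
      exact Real.tendsto_exp_atBot.comp h1

lemma exists_le_cobounded {x : ℝ} (h : ν {y | y < x} ≠ 0) :
    ∃ ε : ℝ, 0 < ε ∧ ν {y | y ≤ x - ε} ≠ 0 := by
  by_contra hc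
  push_neg at hc
  apply h
  have hU : {y : ℝ | y < x} ⊆ ⋃ n : ℕ, {y : ℝ | y ≤ x - 1/(n+1)} := by
    intro y hy
    simp only [Set.mem_setOf_eq] at hy
    obtain ⟨n, hn⟩ := exists_nat_gt (1/(x - y))
    refine Set.mem_iUnion.mpr ⟨n, ?_⟩
    simp only [Set.mem_setOf_eq]
    have hxy : 0 < x - y := by linarith
    have h1 : 1/(x-y) < (n:ℝ) + 1 := hn.trans (by linarith)
    have hn1 : (0:ℝ) < (n:ℝ) + 1 := by positivity
    have h2 : 1/((n:ℝ)+1) < x - y := by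
      rw [div_lt_iff₀ hn1]
      have := (div_lt_iff₀ hxy).mp h1
      nlinarith
    linarith
  have h0 : ν (⋃ n : ℕ, {y : ℝ | y ≤ x - 1/(n+1)}) = 0 :=
    measure_iUnion_null fun n => hc _ (by positivity)
  exact le_antisymm (h0 ▸ measure_mono hU) (zero_le)

end Aux5
section Aux6
open Real
open scoped Topology

variable {ν : Measure ℝ}

lemma integrable_sub_mul_exp (hint : ∀ l : ℝ, Integrable (fun y => exp (l * y)) ν)
    (x l : ℝ) : Integrable (fun y => (y - x) * exp (l * y)) ν := by
  have h := (integrable_mul_exp_of_exp hint l).sub ((hint l).const_mul x)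
  exact h.congr (ae_of_all _ fun y => by simp; ring)

lemma exists_integral_sub_exp_nonpos (hν : IsProbabilityMeasure ν)
    (hint : ∀ l : ℝ, Integrable (fun y => exp (l * y)) ν)
    {x ε : ℝ} (hε : 0 < ε) (hp : ν {y | y ≤ x - ε} ≠ 0) :
    ∃ l : ℝ, ∫ y, (y - x) * exp (l * y) ∂ν ≤ 0 := by
  set A : Set ℝ := {y | y ≤ x - ε} with hA
  have hAm : MeasurableSet A := measurableSet_Iic (a := x - ε)
  set p : ℝ := (ν A).toReal with hpdef
  have hp0 : 0 < p := ENNReal.toReal_pos hp (measure_ne_top _ _)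
  have hCint : Integrable (fun y => max (y - x) 0) ν :=
    ((integrable_id_of_exp hint).sub (integrable_const x)).pos_part
  set C : ℝ := ∫ y, max (y - x) 0 ∂ν with hCdef
  have hC0 : 0 ≤ C := integral_nonneg fun y => le_max_right _ _
  -- choose n
  obtain ⟨n, hn⟩ := exists_pow_lt_of_lt_one (show (0:ℝ) < ε * p / (C + 1) by positivity)
    (exp_lt_one_iff.mpr (neg_neg_iff_pos.mpr hε) : exp (-ε) < 1)
  refine ⟨-(n:ℝ), ?_⟩
  set l : ℝ := -(n:ℝ) with hldef
  have hl0 : l ≤ 0 := by simp [hldef]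
  have hfint : Integrable (fun y => (y - x) * exp (l * y)) ν := integrable_sub_mul_exp hint x l
  have hsplit : ∫ y, (y - x) * exp (l * y) ∂ν
      = (∫ y in A, (y - x) * exp (l * y) ∂ν) + ∫ y in Aᶜ, (y - x) * exp (l * y) ∂ν :=
    (integral_add_compl hAm hfint).symm
  have hbound1 : ∫ y in A, (y - x) * exp (l * y) ∂ν ≤ -ε * exp (l * (x - ε)) * p := by
    have h1 : ∫ y in A, (y - x) * exp (l * y) ∂ν ≤ ∫ y in A, -ε * exp (l * (x - ε)) ∂ν := by
      refine setIntegral_mono_on hfint.integrableOn (integrableOn_const ?_) hAm ?_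
      · exact measure_ne_top _ _
      · intro y hy
        have hy' : y ≤ x - ε := hy
        have he : exp (l * (x - ε)) ≤ exp (l * y) := by
          apply exp_le_exp.mpr
          nlinarith
        nlinarith [exp_pos (l * y), exp_pos (l * (x - ε))]
    rw [setIntegral_const] at h1
    rw [smul_eq_mul] at h1
    calc ∫ y in A, (y - x) * exp (l * y) ∂ν ≤ p * (-ε * exp (l * (x - ε))) := h1
      _ = -ε * exp (l * (x - ε)) * p := by ring
  have hbound2 : ∫ y in Aᶜ, (y - x) * exp (l * y) ∂ν ≤ exp (l * x) * C := by
    have h1 : ∫ y in Aᶜ, (y - x) * exp (l * y) ∂ν ≤ ∫ y in Aᶜ, max (y - x) 0 * exp (l * x) ∂ν := by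
      refine setIntegral_mono_on hfint.integrableOn
        ((hCint.mul_const _).integrableOn) hAm.compl ?_
      intro y _
      rcases le_or_gt y x with hyx | hyx
      · have h2 : (y - x) * exp (l * y) ≤ 0 :=
          mul_nonpos_iff.mpr (Or.inr ⟨by linarith, (exp_pos _).le⟩)
        have h3 : 0 ≤ max (y - x) 0 * exp (l * x) := by positivity
        linarith
      · have he : exp (l * y) ≤ exp (l * x) := by
          apply exp_le_exp.mpr
          nlinarith
        have hm : max (y - x) 0 = y - x := max_eq_left (by linarith)
        rw [hm]
        nlinarith [exp_pos (l * y)]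
    have h2 : ∫ y in Aᶜ, max (y - x) 0 * exp (l * x) ∂ν ≤ ∫ y, max (y - x) 0 * exp (l * x) ∂ν := by
      refine setIntegral_le_integral (hCint.mul_const _) (ae_of_all _ fun y => ?_)
      positivity
    rw [integral_mul_const] at h2
    have h2' : ∫ y in Aᶜ, max (y - x) 0 * exp (l * x) ∂ν ≤ C * exp (l * x) := by
      rw [integral_mul_const]
      exact h2.trans (by rw [hCdef, integral_mul_const])
    calc ∫ y in Aᶜ, (y - x) * exp (l * y) ∂ν ≤ C * exp (l * x) := h1.trans h2'
      _ = exp (l * x) * C := by ring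
  have hkey : exp (l * x) * C ≤ ε * exp (l * (x - ε)) * p := by
    have h1 : exp (l * (x - ε)) = exp (l * x) * exp (n * ε) := by
      rw [← exp_add, hldef]; ring_nf
    have h2 : exp (-ε) ^ n = exp (-(n * ε)) := by
      rw [← exp_nat_mul]; ring_nf
    have h3 : C * exp (-(n*ε)) ≤ ε * p := by
      have h4 : C * exp (-(n*ε)) ≤ C * (ε * p / (C + 1)) := by
        apply mul_le_mul_of_nonneg_left _ hC0
        rw [← h2]; exact hn.le
      have h5 : C * (ε * p / (C + 1)) ≤ ε * p := by
        rw [div_eq_inv_mul]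
        have h6 : C / (C+1) ≤ 1 := by
          apply div_le_one_of_le₀ <;> linarith
        calc C * ((C+1)⁻¹ * (ε * p)) = (C / (C+1)) * (ε * p) := by ring
          _ ≤ 1 * (ε * p) := by
              apply mul_le_mul_of_nonneg_right h6 (by positivity)
          _ = ε * p := one_mul _
      linarith
    calc exp (l * x) * C = C * exp (-(n*ε)) * exp (l * x) * exp (n * ε) := by
          rw [show C * exp (-(↑n*ε)) * exp (l * x) * exp (↑n * ε)
              = C * (exp (-(↑n*ε)) * exp (↑n * ε)) * exp (l * x) by ring, ← exp_add]
          simp [mul_comm]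
      _ ≤ ε * p * (exp (l * x) * exp (n * ε)) := by
          have := mul_le_mul_of_nonneg_right h3
            (show (0:ℝ) ≤ exp (l * x) * exp (n * ε) by positivity)
          calc C * exp (-(n*ε)) * exp (l * x) * exp (n * ε)
              = C * exp (-(n*ε)) * (exp (l * x) * exp (n * ε)) := by ring
            _ ≤ ε * p * (exp (l * x) * exp (n * ε)) := this
      _ = ε * exp (l * (x - ε)) * p := by rw [h1]; ring
  linarith [hsplit, hbound1, hbound2, hkey]

lemma real_coe_le_coe_ennreal_iff {r : ℝ} {c : ℝ≥0∞} :
    (r : EReal) ≤ (c : EReal) ↔ ENNReal.ofReal r ≤ c := by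
  rcases le_or_gt r 0 with hr | hr
  · refine iff_of_true ?_ ?_
    · exact le_trans (by exact_mod_cast hr) (EReal.coe_ennreal_nonneg c)
    · rw [ENNReal.ofReal_eq_zero.mpr hr]; exact zero_le (a := c)
  · rw [show ((r:ℝ):EReal) = ((ENNReal.ofReal r : ℝ≥0∞) : EReal) by
      rw [EReal.coe_ennreal_ofReal, max_eq_left hr.le]]
    exact EReal.coe_ennreal_le_coe_ennreal_iff

end Aux6
section Aux7
open Real
open scoped Topology

variable {ν : Measure ℝ} {x : ℝ}

lemma exists_ge_cobounded (h : ν {y | x < y} ≠ 0) :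
    ∃ ε : ℝ, 0 < ε ∧ ν {y | x + ε ≤ y} ≠ 0 := by
  by_contra hc
  push_neg at hc
  apply h
  have hU : {y : ℝ | x < y} ⊆ ⋃ n : ℕ, {y : ℝ | x + 1/(n+1) ≤ y} := by
    intro y hy
    simp only [Set.mem_setOf_eq] at hy
    obtain ⟨n, hn⟩ := exists_nat_gt (1/(y - x))
    refine Set.mem_iUnion.mpr ⟨n, ?_⟩
    simp only [Set.mem_setOf_eq]
    have hxy : 0 < y - x := by linarith
    have h1 : 1/(y-x) < (n:ℝ) + 1 := hn.trans (by linarith)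
    have hn1 : (0:ℝ) < (n:ℝ) + 1 := by positivity
    have h2 : 1/((n:ℝ)+1) < y - x := by
      rw [div_lt_iff₀ hn1]
      have := (div_lt_iff₀ hxy).mp h1
      nlinarith
    linarith
  have h0 : ν (⋃ n : ℕ, {y : ℝ | x + 1/(n+1) ≤ y}) = 0 :=
    measure_iUnion_null fun n => hc _ (by positivity)
  exact le_antisymm (h0 ▸ measure_mono hU) (zero_le)

lemma exists_integral_sub_exp_nonneg (hν : IsProbabilityMeasure ν)
    (hint : ∀ l : ℝ, Integrable (fun y => exp (l * y)) ν)
    {ε : ℝ} (hε : 0 < ε) (hp : ν {y | x + ε ≤ y} ≠ 0) :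
    ∃ l : ℝ, 0 ≤ ∫ y, (y - x) * exp (l * y) ∂ν := by
  have hm : Measurable (fun y : ℝ => -y) := measurable_neg
  set ν' := ν.map (fun y : ℝ => -y) with hν'
  haveI : IsProbabilityMeasure ν' := Measure.isProbabilityMeasure_map hm.aemeasurable
  have hint' : ∀ l : ℝ, Integrable (fun y => exp (l * y)) ν' := fun l => by
    rw [hν', integrable_map_measure
      (measurable_id'.const_mul l).exp.aestronglyMeasurable hm.aemeasurable]
    exact (hint (-l)).congr (ae_of_all _ fun y => by show _ = exp (l * -y); ring_nf)
  have hp' : ν' {y | y ≤ -x - ε} ≠ 0 := by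
    show ν.map (fun y : ℝ => -y) {y | y ≤ -x - ε} ≠ 0
    rw [show {y : ℝ | y ≤ -x - ε} = Set.Iic (-x - ε) from rfl,
      Measure.map_apply hm (measurableSet_Iic (a := -x - ε))]
    have hset : (fun y : ℝ => -y) ⁻¹' Set.Iic (-x - ε) = {y | x + ε ≤ y} := by
      ext y
      simp only [Set.mem_preimage, Set.mem_Iic, Set.mem_setOf_eq]
      constructor <;> intro <;> linarith
    rw [hset]
    exact hp
  obtain ⟨l, hl⟩ := exists_integral_sub_exp_nonpos (x := -x) ‹_› hint' hε hp'
  rw [show (∫ y, (y - -x) * exp (l * y) ∂ν')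
      = ∫ y, (-y - -x) * exp (l * -y) ∂ν from by
    rw [hν', integral_map hm.aemeasurable (f := fun y : ℝ => (y - -x) * exp (l * y))
      ((measurable_id'.sub measurable_const).mul
        (measurable_id'.const_mul l).exp).aestronglyMeasurable]] at hl
  refine ⟨-l, ?_⟩
  have heq : ∫ y, (-y - -x) * exp (l * -y) ∂ν = - ∫ y, (y - x) * exp (-l * y) ∂ν := by
    rw [← integral_neg]
    congr 1
    funext y
    ring_nf
  rw [heq] at hl
  linarith

end Aux7
section Aux8
open Real
open scoped Topology

variable {ν : Measure ℝ} {x : ℝ}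

lemma mem_msupport_of_atom (hx : ν {x} ≠ 0) : x ∈ msupport ν := by
  intro U hU
  intro h0
  exact hx (le_antisymm ((measure_mono (Set.singleton_subset_iff.mpr
    (mem_of_mem_nhds hU))).trans h0.le) (zero_le))

lemma msupport_inf_eq (hsupp : ν {y | y < x} = 0) (hx : ν {x} ≠ 0) :
    BddBelow (msupport ν) ∧ x = sInf (msupport ν) := by
  have hsub : msupport ν ⊆ Set.Ici x := by
    intro y hy
    by_contra hyx
    simp only [Set.mem_Ici, not_le] at hyx
    exact hy (Set.Iio x) (Iio_mem_nhds hyx) hsupp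
  have hmem : x ∈ msupport ν := mem_msupport_of_atom hx
  have hbdd : BddBelow (msupport ν) := ⟨x, fun y hy => hsub hy⟩
  exact ⟨hbdd, le_antisymm (le_csInf ⟨x, hmem⟩ fun y hy => hsub hy) (csInf_le hbdd hmem)⟩

lemma msupport_sup_eq (hsupp : ν {y | x < y} = 0) (hx : ν {x} ≠ 0) :
    BddAbove (msupport ν) ∧ x = sSup (msupport ν) := by
  have hsub : msupport ν ⊆ Set.Iic x := by
    intro y hy
    by_contra hyx
    simp only [Set.mem_Iic, not_le] at hyx
    exact hy (Set.Ioi x) (Ioi_mem_nhds hyx) hsupp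
  have hmem : x ∈ msupport ν := mem_msupport_of_atom hx
  have hbdd : BddAbove (msupport ν) := ⟨x, fun y hy => hsub hy⟩
  exact ⟨hbdd, le_antisymm (le_csSup hbdd hmem) (csSup_le ⟨x, hmem⟩ fun y hy => hsub hy)⟩

lemma dirac_ac (hx : ν {x} ≠ 0) : Measure.dirac x ≪ ν := by
  intro s hs
  have hxs : x ∉ s := fun hmem => hx (le_antisymm
    ((measure_mono (Set.singleton_subset_iff.mpr hmem)).trans hs.le) (zero_le))
  have h1 : Measure.dirac x s ≤ Measure.dirac x {x}ᶜ :=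
    measure_mono fun y hy => by
      simp only [Set.mem_compl_iff, Set.mem_singleton_iff]
      rintro rfl
      exact hxs hy
  have h2 : Measure.dirac x {x}ᶜ = 0 := by
    rw [Measure.dirac_apply' _ (measurableSet_singleton x).compl]
    simp
  exact le_antisymm (h1.trans h2.le) (zero_le)

lemma dirac_eq_withDensity (hν : IsProbabilityMeasure ν) (hx : ν {x} ≠ 0) :
    Measure.dirac x = ν.withDensity (Set.indicator {x} fun _ => (ν {x})⁻¹) := by
  ext s hs
  rw [withDensity_apply _ hs, lintegral_indicator (measurableSet_singleton x),
    setLIntegral_const, Measure.restrict_apply (measurableSet_singleton x)]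
  by_cases hxs : x ∈ s
  · have : {x} ∩ s = {x} := Set.inter_eq_left.mpr (Set.singleton_subset_iff.mpr hxs)
    rw [this, Measure.dirac_apply_of_mem hxs, ENNReal.inv_mul_cancel hx (measure_ne_top _ _)]
  · have : {x} ∩ s = ∅ := by
      ext y
      simp only [Set.mem_inter_iff, Set.mem_singleton_iff, Set.mem_empty_iff_false,
        iff_false, not_and]
      rintro rfl
      exact hxs
    rw [this, Measure.dirac_apply' _ hs, Set.indicator_of_notMem hxs]
    simp

lemma Emean_dirac : Emean (Measure.dirac x) = x := by
  unfold Emean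
  rw [integral_dirac]

lemma llr_dirac_ae (hν : IsProbabilityMeasure ν) (hx : ν {x} ≠ 0) :
    llr (Measure.dirac x) ν =ᵐ[Measure.dirac x]
      fun _ => -Real.log ((ν {x}).toReal) := by
  haveI := hν
  have hmeas : Measurable (Set.indicator {x} fun _ : ℝ => (ν {x})⁻¹) :=
    Measurable.indicator measurable_const (measurableSet_singleton x)
  have hrn : (Measure.dirac x).rnDeriv ν =ᵐ[ν] Set.indicator {x} fun _ => (ν {x})⁻¹ := by
    nth_rewrite 1 [dirac_eq_withDensity hν hx]
    exact Measure.rnDeriv_withDensity ν hmeas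
  have hrn' := (dirac_ac hx).ae_le hrn
  have hxx : ∀ᵐ y ∂(Measure.dirac x), y = x := by
    rw [MeasureTheory.ae_dirac_eq]
    rfl
  filter_upwards [hrn', hxx] with y hy hyx
  rw [llr, hy, hyx, Set.indicator_of_mem (Set.mem_singleton x), ENNReal.toReal_inv,
    Real.log_inv]

lemma KL_dirac_eq (hν : IsProbabilityMeasure ν) (hx : ν {x} ≠ 0) :
    KL (Measure.dirac x) ν = ENNReal.ofReal (-Real.log ((ν {x}).toReal)) := by
  have hint : Integrable (llr (Measure.dirac x) ν) (Measure.dirac x) :=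
    (integrable_const _).congr (llr_dirac_ae hν hx).symm
  rw [KL_eq_integral_llr (dirac_ac hx) hint, integral_congr_ae (llr_dirac_ae hν hx),
    integral_const]
  simp

end Aux8
section Aux9
open Real
open scoped Topology

variable {ν : Measure ℝ} {l x : ℝ}

lemma llr_self_ae (ν : Measure ℝ) [SigmaFinite ν] : llr ν ν =ᵐ[ν] 0 := by
  filter_upwards [Measure.rnDeriv_self ν] with y hy
  simp [llr, hy]

lemma integral_llr_tiltM (hν : IsProbabilityMeasure ν)
    (hl : Integrable (fun x => exp (l * x)) ν)
    (hid : Integrable (fun x : ℝ => x) (tiltM ν l)) :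
    Integrable (llr (tiltM ν l) ν) (tiltM ν l) ∧
    ∫ y, llr (tiltM ν l) ν y ∂(tiltM ν l)
      = l * Emean (tiltM ν l) - Real.log (∫ x, exp (l * x) ∂ν) := by
  haveI := isProb_tiltM hν hl
  have hac : tiltM ν l ≪ ν := by
    rw [tiltM_eq_tilted]; exact tilted_absolutelyContinuous ν _
  have hae : llr (tiltM ν l) ν =ᵐ[tiltM ν l]
      fun x => l * x - Real.log (∫ x, exp (l * x) ∂ν) := hac.ae_le (llr_tiltM_ae hν hl)
  have hint : Integrable (llr (tiltM ν l) ν) (tiltM ν l) :=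
    (((hid.const_mul l)).sub (integrable_const _)).congr hae.symm
  refine ⟨hint, ?_⟩
  rw [integral_congr_ae hae, integral_sub (hid.const_mul l) (integrable_const _),
    integral_const, integral_const_mul]
  simp [Emean]

lemma integrable_exp_shift (hl : Integrable (fun y => exp (l * y)) ν) (x : ℝ) :
    Integrable (fun y => exp (l * (y - x))) ν :=
  (hl.mul_const (exp (-(l * x)))).congr (ae_of_all _ fun y => by
    show exp (l * y) * exp (-(l * x)) = exp (l * (y - x))
    rw [← exp_add]; ring_nf)

lemma lin_sub_log_Z (hl : Integrable (fun y => exp (l * y)) ν) [NeZero ν] (x : ℝ) :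
    l * x - Real.log (∫ y, exp (l * y) ∂ν)
      = - Real.log (∫ y, exp (l * (y - x)) ∂ν) := by
  have hintW : Integrable (fun y => exp (l * (y - x))) ν := integrable_exp_shift hl x
  have hWpos : 0 < ∫ y, exp (l * (y - x)) ∂ν := integral_exp_pos hintW
  have hZW : ∫ y, exp (l * y) ∂ν = (∫ y, exp (l * (y - x)) ∂ν) * exp (l * x) := by
    rw [← integral_mul_const]
    congr 1
    funext y
    rw [← exp_add]
    ring_nf
  rw [hZW, Real.log_mul hWpos.ne' (exp_pos _).ne', Real.log_exp]
  ring

end Aux9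
section Dir1
open Real
open scoped Topology

lemma phiStar_le_Linfle (D : Set (Measure ℝ))
    (hprob : ∀ ν ∈ D, IsProbabilityMeasure ν)
    (hexp : ∀ ν ∈ D, ∀ l : ℝ, Integrable (fun x => Real.exp (l * x)) ν)
    {ν : Measure ℝ} (hνD : ν ∈ D) {x : ℝ} (hx : x ≤ Emean ν) :
    phiStar ν x ≤ (Linfle D x ν : EReal) := by
  classical
  have hν := hprob ν hνD
  haveI := hν
  haveI : NeZero ν := ⟨hν.ne_zero⟩
  have hint := hexp ν hνD
  rw [phiStar_eq_iSup hint x]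
  refine iSup_le fun l => ?_
  rw [real_coe_le_coe_ennreal_iff]
  unfold Linfle
  refine le_iInf₂ fun ζ hζ => ?_
  obtain ⟨hζD, hζx⟩ := hζ
  by_cases hc : ζ ≪ ν ∧ Integrable (llr ζ ν) ζ
  · obtain ⟨hac, hllr⟩ := hc
    rw [KL_eq_integral_llr hac hllr]
    apply ENNReal.ofReal_le_ofReal
    have hζprob := hprob ζ hζD
    have hζid : Integrable (fun y : ℝ => y) ζ := integrable_id_of_exp (hexp ζ hζD)
    have hgibbs := gibbs_ineq hν hζprob hac (hint l) hζid hllr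
    rcases le_or_gt l 0 with hl | hl
    · nlinarith [hgibbs, mul_le_mul_of_nonpos_left hζx hl]
    · have hνid : Integrable (fun y : ℝ => y) ν := integrable_id_of_exp hint
      have hllrν : Integrable (llr ν ν) ν := (integrable_const 0).congr (llr_self_ae ν).symm
      have hgν := gibbs_ineq hν hν Measure.AbsolutelyContinuous.rfl (hint l) hνid hllrν
      have hνzero : ∫ y, llr ν ν y ∂ν = 0 := by
        rw [integral_congr_ae (llr_self_ae ν)]; simp
      have h0 : 0 ≤ ∫ y, llr ζ ν y ∂ζ := integral_llr_nonneg hζprob hν hac hllr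
      rw [hνzero] at hgν
      nlinarith [mul_le_mul_of_nonneg_left hx hl.le]
  · have htop : KL ζ ν = ⊤ := by unfold KL; exact if_neg hc
    rw [htop]
    exact le_top

lemma phiStar_le_Linfge (D : Set (Measure ℝ))
    (hprob : ∀ ν ∈ D, IsProbabilityMeasure ν)
    (hexp : ∀ ν ∈ D, ∀ l : ℝ, Integrable (fun x => Real.exp (l * x)) ν)
    {ν : Measure ℝ} (hνD : ν ∈ D) {x : ℝ} (hx : Emean ν ≤ x) :
    phiStar ν x ≤ (Linfge D x ν : EReal) := by
  classical
  have hν := hprob ν hνD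
  haveI := hν
  haveI : NeZero ν := ⟨hν.ne_zero⟩
  have hint := hexp ν hνD
  rw [phiStar_eq_iSup hint x]
  refine iSup_le fun l => ?_
  rw [real_coe_le_coe_ennreal_iff]
  unfold Linfge
  refine le_iInf₂ fun ζ hζ => ?_
  obtain ⟨hζD, hζx⟩ := hζ
  by_cases hc : ζ ≪ ν ∧ Integrable (llr ζ ν) ζ
  · obtain ⟨hac, hllr⟩ := hc
    rw [KL_eq_integral_llr hac hllr]
    apply ENNReal.ofReal_le_ofReal
    have hζprob := hprob ζ hζD
    have hζid : Integrable (fun y : ℝ => y) ζ := integrable_id_of_exp (hexp ζ hζD)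
    have hgibbs := gibbs_ineq hν hζprob hac (hint l) hζid hllr
    rcases le_or_gt 0 l with hl | hl
    · nlinarith [hgibbs, mul_le_mul_of_nonneg_left hζx hl]
    · have hνid : Integrable (fun y : ℝ => y) ν := integrable_id_of_exp hint
      have hllrν : Integrable (llr ν ν) ν := (integrable_const 0).congr (llr_self_ae ν).symm
      have hgν := gibbs_ineq hν hν Measure.AbsolutelyContinuous.rfl (hint l) hνid hllrν
      have hνzero : ∫ y, llr ν ν y ∂ν = 0 := by
        rw [integral_congr_ae (llr_self_ae ν)]; simp
      have h0 : 0 ≤ ∫ y, llr ζ ν y ∂ζ := integral_llr_nonneg hζprob hν hac hllr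
      rw [hνzero] at hgν
      nlinarith [mul_le_mul_of_nonpos_left hx hl.le]
  · have htop : KL ζ ν = ⊤ := by unfold KL; exact if_neg hc
    rw [htop]
    exact le_top

end Dir1
section Dir2
open Real
open scoped Topology

lemma Linfle_le_phiStar (D : Set (Measure ℝ))
    (hprob : ∀ ν ∈ D, IsProbabilityMeasure ν)
    (hexp : ∀ ν ∈ D, ∀ l : ℝ, Integrable (fun x => Real.exp (l * x)) ν)
    (htilt : ∀ ν ∈ D, ∀ l : ℝ, tiltM ν l ∈ D)
    (hdirac : ∀ ν ∈ D, ∀ x : ℝ,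
      ((BddBelow (msupport ν) ∧ x = sInf (msupport ν)) ∨
        (BddAbove (msupport ν) ∧ x = sSup (msupport ν))) →
      ν {x} ≠ 0 → Measure.dirac x ∈ D)
    {ν : Measure ℝ} (hνD : ν ∈ D) {x : ℝ} (hx : x ≤ Emean ν) :
    (Linfle D x ν : EReal) ≤ phiStar ν x := by
  classical
  have hν := hprob ν hνD
  haveI := hν
  haveI : NeZero ν := ⟨hν.ne_zero⟩
  have hint := hexp ν hνD
  have hf0 : Emean (tiltM ν 0) = Emean ν := by
    rw [Emean_tiltM (hint 0) (integrable_mul_exp_of_exp hint 0)]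
    simp [Emean]
  by_cases hA : ∃ l : ℝ, Emean (tiltM ν l) ≤ x
  · obtain ⟨l0, hl0⟩ := hA
    have hcont := continuous_Emean_tiltM hν hint
    have hmem : x ∈ Set.uIcc (Emean (tiltM ν l0)) (Emean (tiltM ν 0)) := by
      rw [hf0]
      exact Set.mem_uIcc.mpr (Or.inl ⟨hl0, hx⟩)
    obtain ⟨l1, _, hfl1⟩ :=
      intermediate_value_uIcc (f := fun l => Emean (tiltM ν l)) hcont.continuousOn hmem
    simp only at hfl1
    set ζ := tiltM ν l1 with hζdef
    have hζD := htilt ν hνD l1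
    have hid : Integrable (fun y : ℝ => y) ζ := integrable_id_of_exp (hexp ζ hζD)
    obtain ⟨hllrint, hllreq⟩ := integral_llr_tiltM hν (hint l1) hid
    haveI hζprob : IsProbabilityMeasure ζ := isProb_tiltM hν (hint l1)
    have hKL := KL_tiltM hν (hint l1) hid
    have hr0 : 0 ≤ l1 * Emean ζ - Real.log (∫ y, exp (l1 * y) ∂ν) := by
      rw [← hllreq]
      refine integral_llr_nonneg hζprob hν ?_ hllrint
      rw [tiltM_eq_tilted]
      exact tilted_absolutelyContinuous ν _
    calc (Linfle D x ν : EReal) ≤ (KL ζ ν : EReal) := by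
          apply EReal.coe_ennreal_le_coe_ennreal_iff.mpr
          exact iInf₂_le ζ ⟨hζD, le_of_eq hfl1⟩
      _ ≤ phiStar ν x := by
          rw [hKL, hfl1] at *
          rw [phiStar_eq_iSup hint x]
          refine le_trans (le_of_eq ?_)
            (le_iSup (fun l : ℝ => (((l * x - Real.log (∫ y, exp (l * y) ∂ν)) : ℝ) : EReal)) l1)
          rw [EReal.coe_ennreal_ofReal, max_eq_left (by linarith [hr0])]
  · push_neg at hA
    have hsupp : ν {y | y < x} = 0 := by
      by_contra hne
      obtain ⟨ε, hε, hp⟩ := exists_le_cobounded hne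
      obtain ⟨l, hl⟩ := exists_integral_sub_exp_nonpos hν hint hε hp
      have hNZ : ∫ y, (y - x) * exp (l * y) ∂ν
          = (∫ y, y * exp (l * y) ∂ν) - x * ∫ y, exp (l * y) ∂ν := by
        rw [← integral_const_mul, ← integral_sub (integrable_mul_exp_of_exp hint l)
          (((hint l).const_mul x))]
        congr 1
        funext y
        ring
      have hfl : Emean (tiltM ν l) ≤ x := by
        rw [Emean_tiltM (hint l) (integrable_mul_exp_of_exp hint l),
          div_le_iff₀ (integral_exp_pos (hint l))]
        nlinarith [hl, hNZ]
      exact absurd hfl (not_le.mpr (hA l))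
    have hae0 : ∀ᵐ y ∂ν, 0 ≤ y - x := by
      rw [ae_iff]
      convert hsupp using 2
      ext y
      simp only [Set.mem_setOf_eq, not_le]
      constructor <;> intro <;> linarith
    have hW := tendsto_integral_exp_neg_nat hν (u := fun y => y - x)
      (measurable_id'.sub measurable_const) hae0
    have hsetx : {y : ℝ | y - x = 0} = {x} := by
      ext y
      simp [sub_eq_zero]
    rw [hsetx] at hW
    have hterm : ∀ n : ℕ, -(n:ℝ) * x - Real.log (∫ y, exp (-(n:ℝ) * y) ∂ν)
        = - Real.log (∫ y, exp (-(n:ℝ) * (y - x)) ∂ν) := fun n => lin_sub_log_Z (hint _) x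
    have hWpos : ∀ n : ℕ, 0 < ∫ y, exp (-(n:ℝ) * (y - x)) ∂ν :=
      fun n => integral_exp_pos (integrable_exp_shift (hint _) x)
    by_cases hatom : ν {x} = 0
    · have htop : phiStar ν x = ⊤ := by
        rw [phiStar_eq_iSup hint x, EReal.eq_top_iff_forall_lt]
        intro c
        have hW0 : Tendsto (fun n : ℕ => ∫ y, exp (-(n:ℝ) * (y - x)) ∂ν) atTop (𝓝 0) := by
          rw [hatom] at hW
          simpa using hW
        have hlog : Tendsto (fun n : ℕ => Real.log (∫ y, exp (-(n:ℝ) * (y - x)) ∂ν))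
            atTop atBot := by
          refine Real.tendsto_log_nhdsGT_zero.comp ?_
          rw [tendsto_nhdsWithin_iff]
          exact ⟨hW0, Eventually.of_forall fun n => hWpos n⟩
        have hneg : Tendsto (fun n : ℕ => - Real.log (∫ y, exp (-(n:ℝ) * (y - x)) ∂ν))
            atTop atTop := tendsto_neg_atBot_atTop.comp hlog
        obtain ⟨n, hn⟩ := (hneg.eventually_gt_atTop c).exists
        refine lt_of_lt_of_le ?_
          (le_iSup (fun l : ℝ => (((l * x - Real.log (∫ y, exp (l * y) ∂ν)) : ℝ) : EReal)) (-(n:ℝ)))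
        show (c : EReal) < (((-(n:ℝ)) * x - Real.log (∫ y, exp (-(n:ℝ) * y) ∂ν) : ℝ) : EReal)
        rw [hterm n]
        exact EReal.coe_lt_coe_iff.mpr hn
      rw [htop]
      exact le_top
    · have hδD : Measure.dirac x ∈ D :=
        hdirac ν hνD x (Or.inl (msupport_inf_eq hsupp hatom)) hatom
      set t : ℝ := (ν {x}).toReal with htdef
      have ht0 : 0 < t := ENNReal.toReal_pos hatom (measure_ne_top _ _)
      have ht1 : t ≤ 1 := by
        have h := ENNReal.toReal_mono (ENNReal.one_ne_top) (prob_le_one (μ := ν) (s := {x}))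
        simpa using h
      have hKLδ := KL_dirac_eq hν hatom
      have hlognn : 0 ≤ -Real.log t := neg_nonneg.mpr (Real.log_nonpos ht0.le ht1)
      calc (Linfle D x ν : EReal) ≤ (KL (Measure.dirac x) ν : EReal) := by
            apply EReal.coe_ennreal_le_coe_ennreal_iff.mpr
            exact iInf₂_le _ ⟨hδD, le_of_eq Emean_dirac⟩
        _ = ((-Real.log t : ℝ) : EReal) := by
            rw [hKLδ, EReal.coe_ennreal_ofReal, max_eq_left hlognn]
        _ ≤ phiStar ν x := by
            rw [phiStar_eq_iSup hint x]
            have htends : Tendsto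
                (fun n : ℕ => ((- Real.log (∫ y, exp (-(n:ℝ) * (y - x)) ∂ν) : ℝ) : EReal))
                atTop (𝓝 ((-Real.log t : ℝ) : EReal)) := by
              rw [EReal.tendsto_coe]
              exact ((Real.continuousAt_log ht0.ne').tendsto.comp hW).neg
            refine le_of_tendsto htends (Eventually.of_forall fun n => ?_)
            have := le_iSup
              (fun l : ℝ => (((l * x - Real.log (∫ y, exp (l * y) ∂ν)) : ℝ) : EReal)) (-(n:ℝ))
            rw [← hterm n]
            exact this
      
end Dir2
section Dir2b
open Real
open scoped Topology

lemma Linfge_le_phiStar (D : Set (Measure ℝ))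
    (hprob : ∀ ν ∈ D, IsProbabilityMeasure ν)
    (hexp : ∀ ν ∈ D, ∀ l : ℝ, Integrable (fun x => Real.exp (l * x)) ν)
    (htilt : ∀ ν ∈ D, ∀ l : ℝ, tiltM ν l ∈ D)
    (hdirac : ∀ ν ∈ D, ∀ x : ℝ,
      ((BddBelow (msupport ν) ∧ x = sInf (msupport ν)) ∨
        (BddAbove (msupport ν) ∧ x = sSup (msupport ν))) →
      ν {x} ≠ 0 → Measure.dirac x ∈ D)
    {ν : Measure ℝ} (hνD : ν ∈ D) {x : ℝ} (hx : Emean ν ≤ x) :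
    (Linfge D x ν : EReal) ≤ phiStar ν x := by
  classical
  have hν := hprob ν hνD
  haveI := hν
  haveI : NeZero ν := ⟨hν.ne_zero⟩
  have hint := hexp ν hνD
  have hf0 : Emean (tiltM ν 0) = Emean ν := by
    rw [Emean_tiltM (hint 0) (integrable_mul_exp_of_exp hint 0)]
    simp [Emean]
  by_cases hA : ∃ l : ℝ, x ≤ Emean (tiltM ν l)
  · obtain ⟨l0, hl0⟩ := hA
    have hcont := continuous_Emean_tiltM hν hint
    have hmem : x ∈ Set.uIcc (Emean (tiltM ν l0)) (Emean (tiltM ν 0)) := by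
      rw [hf0]
      exact Set.mem_uIcc.mpr (Or.inr ⟨hx, hl0⟩)
    obtain ⟨l1, _, hfl1⟩ :=
      intermediate_value_uIcc (f := fun l => Emean (tiltM ν l)) hcont.continuousOn hmem
    simp only at hfl1
    set ζ := tiltM ν l1 with hζdef
    have hζD := htilt ν hνD l1
    have hid : Integrable (fun y : ℝ => y) ζ := integrable_id_of_exp (hexp ζ hζD)
    obtain ⟨hllrint, hllreq⟩ := integral_llr_tiltM hν (hint l1) hid
    haveI hζprob : IsProbabilityMeasure ζ := isProb_tiltM hν (hint l1)
    have hKL := KL_tiltM hν (hint l1) hid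
    have hr0 : 0 ≤ l1 * Emean ζ - Real.log (∫ y, exp (l1 * y) ∂ν) := by
      rw [← hllreq]
      refine integral_llr_nonneg hζprob hν ?_ hllrint
      rw [tiltM_eq_tilted]
      exact tilted_absolutelyContinuous ν _
    calc (Linfge D x ν : EReal) ≤ (KL ζ ν : EReal) := by
          apply EReal.coe_ennreal_le_coe_ennreal_iff.mpr
          exact iInf₂_le ζ ⟨hζD, le_of_eq hfl1.symm⟩
      _ ≤ phiStar ν x := by
          rw [hKL, hfl1] at *
          rw [phiStar_eq_iSup hint x]
          refine le_trans (le_of_eq ?_)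
            (le_iSup (fun l : ℝ => (((l * x - Real.log (∫ y, exp (l * y) ∂ν)) : ℝ) : EReal)) l1)
          rw [EReal.coe_ennreal_ofReal, max_eq_left (by linarith [hr0])]
  · push_neg at hA
    have hsupp : ν {y | x < y} = 0 := by
      by_contra hne
      obtain ⟨ε, hε, hp⟩ := exists_ge_cobounded hne
      obtain ⟨l, hl⟩ := exists_integral_sub_exp_nonneg hν hint hε hp
      have hNZ : ∫ y, (y - x) * exp (l * y) ∂ν
          = (∫ y, y * exp (l * y) ∂ν) - x * ∫ y, exp (l * y) ∂ν := by
        rw [← integral_const_mul, ← integral_sub (integrable_mul_exp_of_exp hint l)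
          (((hint l).const_mul x))]
        congr 1
        funext y
        ring
      have hfl : x ≤ Emean (tiltM ν l) := by
        rw [Emean_tiltM (hint l) (integrable_mul_exp_of_exp hint l),
          le_div_iff₀ (integral_exp_pos (hint l))]
        nlinarith [hl, hNZ]
      exact absurd hfl (not_le.mpr (hA l))
    have hae0 : ∀ᵐ y ∂ν, 0 ≤ x - y := by
      rw [ae_iff]
      convert hsupp using 2
      ext y
      simp only [Set.mem_setOf_eq, not_le]
      constructor <;> intro <;> linarith
    have hW := tendsto_integral_exp_neg_nat hν (u := fun y => x - y)
      (measurable_const.sub measurable_id') hae0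
    have hsetx : {y : ℝ | x - y = 0} = {x} := by
      ext y
      simp only [Set.mem_setOf_eq, Set.mem_singleton_iff, sub_eq_zero]
      exact eq_comm
    rw [hsetx] at hW
    have hcongr : ∀ n : ℕ, (∫ y, exp ((n:ℝ) * (y - x)) ∂ν) = ∫ y, exp (-(n:ℝ) * (x - y)) ∂ν := by
      intro n
      congr 1
      funext y
      ring_nf
    have hterm : ∀ n : ℕ, (n:ℝ) * x - Real.log (∫ y, exp ((n:ℝ) * y) ∂ν)
        = - Real.log (∫ y, exp (-(n:ℝ) * (x - y)) ∂ν) := fun n => by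
      rw [lin_sub_log_Z (hint _) x, hcongr n]
    have hWpos : ∀ n : ℕ, 0 < ∫ y, exp (-(n:ℝ) * (x - y)) ∂ν := fun n => by
      rw [← hcongr n]
      exact integral_exp_pos (integrable_exp_shift (hint _) x)
    by_cases hatom : ν {x} = 0
    · have htop : phiStar ν x = ⊤ := by
        rw [phiStar_eq_iSup hint x, EReal.eq_top_iff_forall_lt]
        intro c
        have hW0 : Tendsto (fun n : ℕ => ∫ y, exp (-(n:ℝ) * (x - y)) ∂ν) atTop (𝓝 0) := by
          rw [hatom] at hW
          simpa using hW
        have hlog : Tendsto (fun n : ℕ => Real.log (∫ y, exp (-(n:ℝ) * (x - y)) ∂ν))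
            atTop atBot := by
          refine Real.tendsto_log_nhdsGT_zero.comp ?_
          rw [tendsto_nhdsWithin_iff]
          exact ⟨hW0, Eventually.of_forall fun n => hWpos n⟩
        have hneg : Tendsto (fun n : ℕ => - Real.log (∫ y, exp (-(n:ℝ) * (x - y)) ∂ν))
            atTop atTop := tendsto_neg_atBot_atTop.comp hlog
        obtain ⟨n, hn⟩ := (hneg.eventually_gt_atTop c).exists
        refine lt_of_lt_of_le ?_
          (le_iSup (fun l : ℝ => (((l * x - Real.log (∫ y, exp (l * y) ∂ν)) : ℝ) : EReal)) ((n:ℝ)))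
        show (c : EReal) < ((((n:ℝ)) * x - Real.log (∫ y, exp ((n:ℝ) * y) ∂ν) : ℝ) : EReal)
        rw [hterm n]
        exact EReal.coe_lt_coe_iff.mpr hn
      rw [htop]
      exact le_top
    · have hδD : Measure.dirac x ∈ D :=
        hdirac ν hνD x (Or.inr (msupport_sup_eq hsupp hatom)) hatom
      set t : ℝ := (ν {x}).toReal with htdef
      have ht0 : 0 < t := ENNReal.toReal_pos hatom (measure_ne_top _ _)
      have ht1 : t ≤ 1 := by
        have h := ENNReal.toReal_mono (ENNReal.one_ne_top) (prob_le_one (μ := ν) (s := {x}))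
        simpa using h
      have hKLδ := KL_dirac_eq hν hatom
      have hlognn : 0 ≤ -Real.log t := neg_nonneg.mpr (Real.log_nonpos ht0.le ht1)
      calc (Linfge D x ν : EReal) ≤ (KL (Measure.dirac x) ν : EReal) := by
            apply EReal.coe_ennreal_le_coe_ennreal_iff.mpr
            exact iInf₂_le _ ⟨hδD, le_of_eq Emean_dirac.symm⟩
        _ = ((-Real.log t : ℝ) : EReal) := by
            rw [hKLδ, EReal.coe_ennreal_ofReal, max_eq_left hlognn]
        _ ≤ phiStar ν x := by
            rw [phiStar_eq_iSup hint x]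
            have htends : Tendsto
                (fun n : ℕ => ((- Real.log (∫ y, exp (-(n:ℝ) * (x - y)) ∂ν) : ℝ) : EReal))
                atTop (𝓝 ((-Real.log t : ℝ) : EReal)) := by
              rw [EReal.tendsto_coe]
              exact ((Real.continuousAt_log ht0.ne').tendsto.comp hW).neg
            refine le_of_tendsto htends (Eventually.of_forall fun n => ?_)
            have := le_iSup
              (fun l : ℝ => (((l * x - Real.log (∫ y, exp (l * y) ∂ν)) : ℝ) : EReal)) ((n:ℝ))
            rw [← hterm n]
            exact this

end Dir2b
/-- Let `D` be a set of probability measures on ℝ with all exponential moments finite,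
stable by exponential reweighting, and containing the Dirac mass at every finite support end
which is an atom of some of its members. Then for every `ν ∈ D`:
`φ*_ν(x) = Linf≤(x,ν)` for all `x ≤ E(ν)`, and `φ*_ν(x) = Linf≥(x,ν)` for all `x ≥ E(ν)`. -/
theorem phiStar_eq_Linf_of_stable (D : Set (Measure ℝ))
    (hprob : ∀ ν ∈ D, IsProbabilityMeasure ν)
    (hexp : ∀ ν ∈ D, ∀ l : ℝ, Integrable (fun x => Real.exp (l * x)) ν)
    (htilt : ∀ ν ∈ D, ∀ l : ℝ, tiltM ν l ∈ D)
    (hdirac : ∀ ν ∈ D, ∀ x : ℝ,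
      ((BddBelow (msupport ν) ∧ x = sInf (msupport ν)) ∨
        (BddAbove (msupport ν) ∧ x = sSup (msupport ν))) →
      ν {x} ≠ 0 → Measure.dirac x ∈ D) :
    ∀ ν ∈ D,
      (∀ x : ℝ, x ≤ Emean ν → phiStar ν x = (Linfle D x ν : EReal)) ∧
      (∀ x : ℝ, Emean ν ≤ x → phiStar ν x = (Linfge D x ν : EReal)) := by
  intro ν hνD
  constructor
  · intro x hx
    exact le_antisymm (phiStar_le_Linfle D hprob hexp hνD hx)
      (Linfle_le_phiStar D hprob hexp htilt hdirac hνD hx)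
  · intro x hx
    exact le_antisymm (phiStar_le_Linfge D hprob hexp hνD hx)
      (Linfge_le_phiStar D hprob hexp htilt hdirac hνD hx)

end
end

section
/- The model P[0,1] is normal: for every ν ∈ P[0,1], every x ≥ E(ν) and every ε > 0, one has Linf>(x,ν) = inf{ KL(ζ,ν) : ζ ∈ P[0,1], x < E(ζ) < x + ε }. -/
open MeasureTheory Filter Set ProbabilityTheory
open scoped ENNReal NNReal

noncomputable section

lemma isFiniteMeasure_ofReal_smul (μ : Measure ℝ) [IsFiniteMeasure μ] (c : ℝ) :
    IsFiniteMeasure (ENNReal.ofReal c • μ) :=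
  ⟨by rw [Measure.smul_apply, smul_eq_mul]
      exact ENNReal.mul_lt_top ENNReal.ofReal_lt_top (measure_lt_top μ _)⟩

lemma KL_mix_le {ν ζ : Measure ℝ} [IsProbabilityMeasure ν] [IsProbabilityMeasure ζ]
    (hac : ζ ≪ ν) (hint : Integrable (fun y => Real.log ((ζ.rnDeriv ν y).toReal)) ζ)
    {t : ℝ} (ht0 : 0 < t) (ht1 : t < 1) :
    KL (ENNReal.ofReal (1 - t) • ν + ENNReal.ofReal t • ζ) ν ≤ KL ζ ν := by
  have h1t : (0:ℝ) < 1 - t := by linarith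
  haveI := isFiniteMeasure_ofReal_smul ν (1 - t)
  haveI := isFiniteMeasure_ofReal_smul ζ t
  set ζ' : Measure ℝ := ENNReal.ofReal (1 - t) • ν + ENNReal.ofReal t • ζ with hζ'def
  set f : ℝ → ℝ := fun y => (ζ.rnDeriv ν y).toReal with hfdef
  set g : ℝ → ℝ := fun y => (1 - t) + t * f y with hgdef
  have hf0 : ∀ y, 0 ≤ f y := fun y => ENNReal.toReal_nonneg
  have hgpos : ∀ y, 0 < g y := fun y =>
    add_pos_of_pos_of_nonneg h1t (mul_nonneg ht0.le (hf0 y))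
  have hfmeas : Measurable f := (Measure.measurable_rnDeriv ζ ν).ennreal_toReal
  have hgmeas : Measurable g := measurable_const.add (measurable_const.mul hfmeas)
  have hloggmeas : Measurable fun y => Real.log (g y) := Real.measurable_log.comp hgmeas
  -- absolute continuity of the mixture
  have hac' : ζ' ≪ ν := by
    refine Measure.AbsolutelyContinuous.mk fun s hs hs0 => ?_
    rw [hζ'def, Measure.add_apply, Measure.smul_apply, Measure.smul_apply, hs0, hac hs0]
    simp
  -- rnDeriv of the mixture
  have h_rn : (fun y => (ζ'.rnDeriv ν y).toReal) =ᵐ[ν] g := by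
    filter_upwards [Measure.rnDeriv_add (ENNReal.ofReal (1 - t) • ν) (ENNReal.ofReal t • ζ) ν,
      Measure.rnDeriv_smul_left_of_ne_top ν ν (ENNReal.ofReal_ne_top (r := 1 - t)),
      Measure.rnDeriv_smul_left_of_ne_top ζ ν (ENNReal.ofReal_ne_top (r := t)),
      Measure.rnDeriv_self ν, Measure.rnDeriv_lt_top ζ ν] with y h1 h2 h3 h4 h5
    rw [hζ'def]
    rw [h1, Pi.add_apply, h2, h3, Pi.smul_apply, Pi.smul_apply, h4, smul_eq_mul, smul_eq_mul,
      mul_one, ENNReal.toReal_add (ENNReal.ofReal_ne_top)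
        (ENNReal.mul_ne_top ENNReal.ofReal_ne_top h5.ne),
      ENNReal.toReal_mul, ENNReal.toReal_ofReal h1t.le, ENNReal.toReal_ofReal ht0.le]
  -- integrability of log g w.r.t. ν
  have hf_int : Integrable f ν := Measure.integrable_toReal_rnDeriv
  have hI1 : Integrable (fun y => Real.log (g y)) ν := by
    refine Integrable.mono' ((integrable_const |Real.log (1 - t)|).add hf_int)
      hloggmeas.aestronglyMeasurable (ae_of_all _ fun y => ?_)
    have hub : Real.log (g y) ≤ g y - 1 := Real.log_le_sub_one_of_pos (hgpos y)
    have hlb : Real.log (1 - t) ≤ Real.log (g y) :=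
      Real.log_le_log h1t (by simp only [hgdef]; nlinarith [hf0 y])
    have hlneg : Real.log (1 - t) ≤ 0 := Real.log_nonpos (by linarith) (by linarith)
    rcases le_or_gt 0 (Real.log (g y)) with h | h
    · rw [Real.norm_eq_abs, abs_of_nonneg h]
      have : g y - 1 ≤ f y := by simp only [hgdef]; nlinarith [hf0 y]
      have := abs_nonneg (Real.log (1 - t))
      simp only [Pi.add_apply]
      linarith
    · rw [Real.norm_eq_abs, abs_of_neg h]
      rw [abs_of_nonpos hlneg]
      simp only [Pi.add_apply]
      linarith [hf0 y]
  -- integrability of log g w.r.t. ζ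
  have hI2 : Integrable (fun y => Real.log (g y)) ζ := by
    refine Integrable.mono' ((integrable_const |Real.log (1 - t)|).add hint.abs)
      hloggmeas.aestronglyMeasurable (ae_of_all _ fun y => ?_)
    have hlb : Real.log (1 - t) ≤ Real.log (g y) :=
      Real.log_le_log h1t (by simp only [hgdef]; nlinarith [hf0 y])
    have hlneg : Real.log (1 - t) ≤ 0 := Real.log_nonpos (by linarith) (by linarith)
    simp only [Pi.add_apply]
    rcases le_or_gt 0 (Real.log (g y)) with h | h
    · rw [Real.norm_eq_abs, abs_of_nonneg h]
      have hg1 : 1 ≤ g y := by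
        by_contra hgy
        push_neg at hgy
        exact absurd (Real.log_neg (hgpos y) hgy) (not_lt.2 h)
      have hf1 : 1 ≤ f y := by simp only [hgdef] at hg1; nlinarith
      have hgf : g y ≤ f y := by simp only [hgdef]; nlinarith
      have : Real.log (g y) ≤ Real.log (f y) := Real.log_le_log (hgpos y) hgf
      have h2 : Real.log (f y) ≤ |Real.log (f y)| := le_abs_self _
      have := abs_nonneg (Real.log (1 - t))
      linarith
    · rw [Real.norm_eq_abs, abs_of_neg h, abs_of_nonpos hlneg]
      linarith [abs_nonneg (Real.log (f y))]
  have hI1' : Integrable (fun y => Real.log (g y)) (ENNReal.ofReal (1 - t) • ν) :=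
    hI1.smul_measure ENNReal.ofReal_ne_top
  have hI2' : Integrable (fun y => Real.log (g y)) (ENNReal.ofReal t • ζ) :=
    hI2.smul_measure ENNReal.ofReal_ne_top
  have hIζ' : Integrable (fun y => Real.log (g y)) ζ' := by
    rw [hζ'def]
    exact (integrable_add_measure).2 ⟨hI1', hI2'⟩
  have h_rn' : (fun y => (ζ'.rnDeriv ν y).toReal) =ᵐ[ζ'] g := h_rn.filter_mono hac'.ae_le
  have h_rnlog : (fun y => Real.log ((ζ'.rnDeriv ν y).toReal)) =ᵐ[ζ']
      (fun y => Real.log (g y)) := by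
    filter_upwards [h_rn'] with y hy
    rw [hy]
  have hcond : Integrable (fun y => Real.log ((ζ'.rnDeriv ν y).toReal)) ζ' :=
    hIζ'.congr h_rnlog.symm
  -- change of measure facts
  have hint_ν : Integrable (fun y => f y * Real.log (f y)) ν := by
    have := (integrable_rnDeriv_smul_iff hac).mpr hint
    simpa only [smul_eq_mul] using this
  have hI2ν : Integrable (fun y => f y * Real.log (g y)) ν := by
    have := (integrable_rnDeriv_smul_iff hac).mpr hI2
    simpa only [smul_eq_mul] using this
  have E3 : ∫ y, Real.log (g y) ∂ζ = ∫ y, f y * Real.log (g y) ∂ν := by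
    have := integral_rnDeriv_smul hac (f := fun y => Real.log (g y))
    simp only [smul_eq_mul] at this
    exact this.symm
  have E4 : ∫ y, Real.log (f y) ∂ζ = ∫ y, f y * Real.log (f y) ∂ν := by
    have := integral_rnDeriv_smul hac (f := fun y => Real.log (f y))
    simp only [smul_eq_mul] at this
    exact this.symm
  -- pointwise convexity inequality
  have key : ∀ y, (1 - t) * Real.log (g y) + t * (f y * Real.log (g y))
      ≤ t * (f y * Real.log (f y)) := by
    intro y
    have hc := Real.convexOn_mul_log.2 (Set.mem_Ici.2 (zero_le_one)) (Set.mem_Ici.2 (hf0 y))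
      (by linarith : (0:ℝ) ≤ 1 - t) ht0.le (by ring)
    simp only [smul_eq_mul, mul_one, Real.log_one, mul_zero, add_zero, zero_add] at hc
    have hgy : g y = 1 - t + t * f y := rfl
    rw [hgy]
    nlinarith [hc]
  -- main computation
  have hmain : ∫ y, Real.log ((ζ'.rnDeriv ν y).toReal) ∂ζ'
      ≤ t * ∫ y, Real.log ((ζ.rnDeriv ν y).toReal) ∂ζ := by
    rw [integral_congr_ae h_rnlog]
    have E2 : ∫ y, Real.log (g y) ∂ζ'
        = (1 - t) * ∫ y, Real.log (g y) ∂ν + t * ∫ y, Real.log (g y) ∂ζ := by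
      rw [hζ'def, integral_add_measure hI1' hI2', integral_smul_measure, integral_smul_measure,
        ENNReal.toReal_ofReal h1t.le, ENNReal.toReal_ofReal ht0.le, smul_eq_mul, smul_eq_mul]
    rw [E2, E3]
    have Eν : (1 - t) * ∫ y, Real.log (g y) ∂ν + t * ∫ y, f y * Real.log (g y) ∂ν
        = ∫ y, ((1 - t) * Real.log (g y) + t * (f y * Real.log (g y))) ∂ν := by
      rw [integral_add (hI1.const_mul _) (hI2ν.const_mul _), integral_const_mul, integral_const_mul]
    rw [Eν]
    have hle : ∫ y, ((1 - t) * Real.log (g y) + t * (f y * Real.log (g y))) ∂ν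
        ≤ ∫ y, t * (f y * Real.log (f y)) ∂ν :=
      integral_mono ((hI1.const_mul _).add (hI2ν.const_mul _)) (hint_ν.const_mul t)
        (fun y => key y)
    rw [integral_const_mul] at hle
    calc ∫ y, ((1 - t) * Real.log (g y) + t * (f y * Real.log (g y))) ∂ν
        ≤ t * ∫ y, f y * Real.log (f y) ∂ν := hle
      _ = t * ∫ y, Real.log (f y) ∂ζ := by rw [E4]
  -- conclude
  rw [KL, if_pos ⟨hac', hcond⟩, KL, if_pos ⟨hac, hint⟩]
  set I := ∫ y, Real.log ((ζ.rnDeriv ν y).toReal) ∂ζ with hI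
  rcases le_or_gt 0 I with h | h
  · exact ENNReal.ofReal_le_ofReal (by nlinarith [hmain])
  · have : ENNReal.ofReal (∫ y, Real.log ((ζ'.rnDeriv ν y).toReal) ∂ζ') = 0 :=
      ENNReal.ofReal_eq_zero.2 (by nlinarith [hmain])
    rw [this]
    exact zero_le

lemma pcc_integrable_id {ν : Measure ℝ} (h : ν ∈ Pcc) : Integrable (fun x : ℝ => x) ν := by
  haveI := h.1
  refine Integrable.mono' (integrable_const 1) aestronglyMeasurable_id ?_
  have h0 : ∀ᵐ y ∂ν, y ∈ Set.Icc (0:ℝ) 1 := by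
    rw [ae_iff]
    exact h.2
  filter_upwards [h0] with y hy
  rw [Real.norm_eq_abs, abs_le]
  exact ⟨by linarith [hy.1], hy.2⟩

lemma mix_mem_Pcc {ν ζ : Measure ℝ} (hν : ν ∈ Pcc) (hζ : ζ ∈ Pcc) {t : ℝ}
    (ht0 : 0 ≤ t) (ht1 : t ≤ 1) :
    (ENNReal.ofReal (1 - t) • ν + ENNReal.ofReal t • ζ) ∈ Pcc := by
  haveI := hν.1; haveI := hζ.1
  refine ⟨⟨?_⟩, ?_⟩
  · rw [Measure.add_apply, Measure.smul_apply, Measure.smul_apply, measure_univ, measure_univ,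
      smul_eq_mul, smul_eq_mul, mul_one, mul_one, ← ENNReal.ofReal_add (by linarith) ht0]
    norm_num
  · rw [Measure.add_apply, Measure.smul_apply, Measure.smul_apply, hν.2, hζ.2]
    simp

lemma Emean_mix {ν ζ : Measure ℝ} (hν : Integrable (fun x : ℝ => x) ν)
    (hζ : Integrable (fun x : ℝ => x) ζ) {t : ℝ} (ht0 : 0 ≤ t) (ht1 : t ≤ 1) :
    ∫ y, y ∂(ENNReal.ofReal (1 - t) • ν + ENNReal.ofReal t • ζ)
      = (1 - t) * ∫ y, y ∂ν + t * ∫ y, y ∂ζ := by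
  rw [integral_add_measure (hν.smul_measure ENNReal.ofReal_ne_top)
    (hζ.smul_measure ENNReal.ofReal_ne_top), integral_smul_measure, integral_smul_measure,
    ENNReal.toReal_ofReal (by linarith), ENNReal.toReal_ofReal ht0, smul_eq_mul, smul_eq_mul]

/-- The model `P[0,1]` is normal: for every `ν ∈ P[0,1]`, every `x ≥ E(ν)` and every `ε > 0`,
`Linf>(x,ν) = inf {KL(ζ,ν) : ζ ∈ P[0,1], x < E(ζ) < x + ε}`. -/
theorem Pcc_is_normal :
    ∀ ν ∈ Pcc, ∀ x : ℝ, Emean ν ≤ x → ∀ ε : ℝ, 0 < ε →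
      Linfgt Pcc x ν = ⨅ ζ ∈ {ζ ∈ Pcc | x < Emean ζ ∧ Emean ζ < x + ε}, KL ζ ν := by
  intro ν hν x hx ε hε
  refine le_antisymm (le_iInf₂ fun ζ hζ => iInf₂_le ζ ⟨hζ.1, hζ.2.1⟩) (le_iInf₂ fun ζ hζ => ?_)
  obtain ⟨hζP, hζx⟩ := hζ
  by_cases hKL : ζ ≪ ν ∧ Integrable (fun y => Real.log ((ζ.rnDeriv ν y).toReal)) ζ
  swap
  · rw [KL, if_neg hKL]
    exact le_top
  haveI := hν.1; haveI := hζP.1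
  have hmM : Emean ν < Emean ζ := lt_of_le_of_lt hx hζx
  set m := Emean ν with hm
  set M := Emean ζ with hM
  set δ := min ε (M - x) / 2 with hδ
  have hδ0 : 0 < δ := half_pos (lt_min hε (by linarith))
  have hδε : δ < ε := by
    have : δ ≤ ε / 2 := by
      rw [hδ]
      exact div_le_div_of_nonneg_right (min_le_left _ _) two_pos.le
    linarith
  have hδM : δ < M - x := by
    have : δ ≤ (M - x) / 2 := by
      rw [hδ]
      exact div_le_div_of_nonneg_right (min_le_right _ _) two_pos.le
    linarith
  set t := (x - m + δ) / (M - m) with htdef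
  have hMm : (0:ℝ) < M - m := by linarith
  have ht0 : 0 < t := div_pos (by linarith) hMm
  have ht1 : t < 1 := (div_lt_one hMm).2 (by linarith)
  set ζ' : Measure ℝ := ENNReal.ofReal (1 - t) • ν + ENNReal.ofReal t • ζ with hζ'def
  have hmem : ζ' ∈ Pcc := mix_mem_Pcc hν hζP ht0.le ht1.le
  have hE : Emean ζ' = (1 - t) * m + t * M := by
    rw [hζ'def]
    exact Emean_mix (pcc_integrable_id hν) (pcc_integrable_id hζP) ht0.le ht1.le
  have htm : t * (M - m) = x - m + δ := by
    rw [htdef]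
    field_simp
  have hEval : Emean ζ' = x + δ := by
    rw [hE]
    linear_combination htm
  refine le_trans (iInf₂_le ζ' ⟨hmem, by rw [hEval]; linarith, by rw [hEval]; linarith⟩) ?_
  exact KL_mix_le hKL.1 hKL.2 ht0 ht1

end
end

section
/- For every x ∈ [1/4, 1/2]: (1−x)·ln((1−x)/x) + x·ln(x/(1−x)) ≤ 9·(1/2 − x)². Equivalently, the Kullback–Leibler divergence between the Bernoulli distributions of parameters 1−x and x satisfies KL(Ber(1−x), Ber(x)) ≤ 9·(1/2 − x)² for x ∈ [1/4, 1/2]. -/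
lemma log_le_half (y : ℝ) (hy : 1 ≤ y) : Real.log y ≤ (y - 1/y)/2 := by
  have hmono : MonotoneOn (fun t : ℝ => (t - 1/t)/2 - Real.log t) (Set.Ici 1) := by
    apply monotoneOn_of_deriv_nonneg (convex_Ici 1)
    · apply ContinuousOn.sub
      · exact ((continuousOn_id.sub (continuousOn_const.div continuousOn_id
          (fun t ht => by have h1 : (1:ℝ) ≤ t := ht; intro h0; simp at h0; linarith))).div_const 2)
      · exact Real.continuousOn_log.mono (fun t ht => by
          have : (1:ℝ) ≤ t := ht; simp; linarith)
    · intro t ht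
      have ht1 : (1:ℝ) < t := by simpa [interior_Ici] using ht
      have ht0 : (0:ℝ) < t := by linarith
      have hd : HasDerivAt (fun t : ℝ => (t - 1/t)/2 - Real.log t)
          ((1 - (-(1/t^2)))/2 - t⁻¹) t := by
        have h1 : HasDerivAt (fun t : ℝ => 1/t) (-(1/t^2)) t := by
          simpa using (hasDerivAt_inv (ne_of_gt ht0))
        exact (((hasDerivAt_id t).sub h1).div_const 2).sub (Real.hasDerivAt_log (ne_of_gt ht0))
      exact (hd.differentiableAt.differentiableWithinAt)
    · intro t ht
      have ht1 : (1:ℝ) < t := by simpa [interior_Ici] using ht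
      have ht0 : (0:ℝ) < t := by linarith
      have hd : HasDerivAt (fun t : ℝ => (t - 1/t)/2 - Real.log t)
          ((1 - (-(1/t^2)))/2 - t⁻¹) t := by
        have h1 : HasDerivAt (fun t : ℝ => 1/t) (-(1/t^2)) t := by
          simpa using (hasDerivAt_inv (ne_of_gt ht0))
        exact (((hasDerivAt_id t).sub h1).div_const 2).sub (Real.hasDerivAt_log (ne_of_gt ht0))
      rw [hd.deriv]
      have h2 : (1 - (-(1/t^2)))/2 - t⁻¹ = (t-1)^2/(2*t^2) := by field_simp; ring
      rw [h2]; positivity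
  have h := hmono (Set.self_mem_Ici) (Set.mem_Ici.mpr hy) hy
  simp only [Real.log_one] at h
  have hy0 : (0:ℝ) < y := by linarith
  have : (1 - 1/1)/2 - 0 ≤ (y - 1/y)/2 - Real.log y := by simpa using h
  linarith

/-- For every `x ∈ [1/4, 1/2]`, the Kullback–Leibler divergence between the Bernoulli
distributions of parameters `1 − x` and `x`, namely
`(1−x)·ln((1−x)/x) + x·ln(x/(1−x))`, is at most `9·(1/2 − x)²`. -/
theorem bernoulli_kl_le_nine_gap_sq :
    ∀ x ∈ Set.Icc (1/4 : ℝ) (1/2 : ℝ),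
      (1 - x) * Real.log ((1 - x) / x) + x * Real.log (x / (1 - x))
        ≤ 9 * (1/2 - x) ^ 2 := by
  intro x hx
  obtain ⟨hx1, hx2⟩ := hx
  have hx0 : (0:ℝ) < x := by linarith
  have h1x : (0:ℝ) < 1 - x := by linarith
  have hlog : Real.log (x/(1-x)) = - Real.log ((1-x)/x) := by
    rw [← Real.log_inv]; congr 1; field_simp
  rw [hlog]
  have hgap : (0:ℝ) ≤ 1 - 2*x := by linarith
  rcases le_or_gt (1/3 : ℝ) x with hc | hc
  · -- x ∈ [1/3, 1/2]
    have hr : (1:ℝ) ≤ (1-x)/x := by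
      rw [le_div_iff₀ hx0]; linarith
    have hL := log_le_half _ hr
    have hLval : ((1-x)/x - 1/((1-x)/x))/2 = (1 - 2*x)/(2*x*(1-x)) := by
      field_simp; ring
    rw [hLval] at hL
    have hprod : (2:ℝ)/9 ≤ x*(1-x) := by nlinarith
    have key : (1 - 2*x) * Real.log ((1-x)/x) ≤ (1-2*x)^2/(2*x*(1-x)) := by
      have := mul_le_mul_of_nonneg_left hL hgap
      calc (1 - 2*x) * Real.log ((1-x)/x) ≤ (1-2*x) * ((1 - 2*x)/(2*x*(1-x))) := this
        _ = (1-2*x)^2/(2*x*(1-x)) := by ring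
    have h2 : (1-2*x)^2/(2*x*(1-x)) ≤ 9 * (1/2 - x)^2 := by
      rw [div_le_iff₀ (by positivity)]
      nlinarith [sq_nonneg (1-2*x), hprod]
    nlinarith [key, h2]
  · -- x ∈ [1/4, 1/3)
    have hr : (1:ℝ) ≤ (1-x)/(2*x) := by
      rw [le_div_iff₀ (by positivity)]; linarith
    have hsplit : Real.log ((1-x)/x) = Real.log 2 + Real.log ((1-x)/(2*x)) := by
      rw [← Real.log_mul (by norm_num) (by positivity)]
      congr 1; field_simp
    have hL := log_le_half _ hr
    have hlog2 := Real.log_two_lt_d9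
    have hLval : ((1-x)/(2*x) - 1/((1-x)/(2*x)))/2 = ((1-x)^2 - 4*x^2)/(4*x*(1-x)) := by
      field_simp; ring
    rw [hLval] at hL
    have hbound : Real.log ((1-x)/x) ≤ 0.6931472 + ((1-x)^2 - 4*x^2)/(4*x*(1-x)) := by
      rw [hsplit]; linarith
    have key : (1 - 2*x) * Real.log ((1-x)/x)
        ≤ (1 - 2*x) * (0.6931472 + ((1-x)^2 - 4*x^2)/(4*x*(1-x))) :=
      mul_le_mul_of_nonneg_left hbound hgap
    have h2 : (1 - 2*x) * (0.6931472 + ((1-x)^2 - 4*x^2)/(4*x*(1-x))) ≤ 9 * (1/2 - x)^2 := by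
      have hx1x : (0:ℝ) < 4*x*(1-x) := by positivity
      rw [← sub_nonneg]
      have expand : 9 * (1/2 - x)^2 - (1 - 2*x) * (0.6931472 + ((1-x)^2 - 4*x^2)/(4*x*(1-x)))
          = ((9 * (1/2 - x)^2 - (1 - 2*x)*0.6931472) * (4*x*(1-x)) - (1-2*x)*((1-x)^2 - 4*x^2)) / (4*x*(1-x)) := by
        field_simp; ring
      rw [expand]
      apply div_nonneg _ (le_of_lt hx1x)
      nlinarith [mul_nonneg (sub_nonneg.mpr hx1) (le_of_lt (sub_pos.mpr hc)),
        sq_nonneg (x - 1/4), sq_nonneg (x - 1/3), sq_nonneg (1 - 3*x)]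
    nlinarith [key, h2]
end
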